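/- arXiv:2002.10396 — 2 statements merged into one kernel-verified Lean document; each statement's English description precedes it below -/
import Mathlib

section
/- There exists a universal constant c > 0 with the following property. Let p ∈ (1,∞), K ≥ 1, n a positive integer, and X a real Banach space, and suppose there exists a linear map J from the space of real-valued functions on 𝒞_n to X such that ‖h‖_{L_1(𝒞_n;ℝ)} ≤ ‖J h‖_X ≤ K ‖h‖_{L_1(𝒞_n;ℝ)} for every h : 𝒞_n → ℝ. Then there exist functions f_1,…,f_n : 𝒞_n → X such that (2^{−n} Σ_{δ∈𝒞_n} ‖Σ_{i=1}^n δ_i 𝔈_i f_i‖_{L_p(𝒞_n;X)}^p)^{1/p} ≥ c K^{−1} √n (2^{−n} Σ_{δ∈𝒞_n} ‖Σ_{i=1}^n δ_i f_i‖_{L_p(𝒞_n;X)}^p)^{1/p} and the right-hand side is strictly positive. In particular, if X contains the spaces ℓ_1^N uniformly (i.e., such maps J exist for all n with a fixed K), then X does not satisfy the hypercube Stein inequality with any finite constant. -/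
noncomputable section

open Finset

/-- The sign `±1` attached to a boolean coordinate of the discrete cube. -/
def sgn (b : Bool) : ℝ := if b then 1 else -1

variable {X : Type*} [NormedAddCommGroup X] [NormedSpace ℝ X]

/-- `L_p` norm of `f : 𝒞_n → X` with respect to the uniform probability measure. -/
def cubeLpNorm (n : ℕ) (p : ℝ) (f : (Fin n → Bool) → X) : ℝ :=
  (((2 : ℝ) ^ n)⁻¹ * ∑ ε : Fin n → Bool, ‖f ε‖ ^ p) ^ (1 / p)

/-- Conditional expectation given the coordinates in `S`: average of `f η` over all
`η` agreeing with `ε` on `S`. -/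
def cubeCondExp (n : ℕ) (S : Finset (Fin n)) (f : (Fin n → Bool) → X) :
    (Fin n → Bool) → X := fun ε =>
  ((2 : ℝ) ^ (n - S.card))⁻¹ •
    ∑ η ∈ univ.filter (fun η : Fin n → Bool => ∀ j ∈ S, η j = ε j), f η

/-- The set of the first `i` coordinates (`0`-based). -/
def firstIdx (n i : ℕ) : Finset (Fin n) := univ.filter fun j => (j : ℕ) < i

/-- `𝔈_i`: conditioning on the first `i` coordinates. -/
def Ei (n i : ℕ) (f : (Fin n → Bool) → X) : (Fin n → Bool) → X :=
  cubeCondExp n (firstIdx n i) f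

/-- `𝔈_i^π`: conditioning on the coordinates `π(1),…,π(i)`. -/
def Epi (n : ℕ) (π : Equiv.Perm (Fin n)) (i : ℕ) (f : (Fin n → Bool) → X) :
    (Fin n → Bool) → X :=
  cubeCondExp n ((firstIdx n i).image π) f

/-- `∂_i`: the `i`-th discrete partial derivative. -/
def cubeDeriv (n : ℕ) (i : Fin n) (f : (Fin n → Bool) → X) : (Fin n → Bool) → X :=
  fun ε => (2 : ℝ)⁻¹ • (f ε - f (Function.update ε i (!(ε i))))

/-- `X` satisfies the hypercube Stein inequality with constant `s` for exponent `p`. -/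
def SteinIneq (X : Type*) [NormedAddCommGroup X] [NormedSpace ℝ X] (p s : ℝ) : Prop :=
  ∀ m : ℕ, 0 < m → ∀ (π : Equiv.Perm (Fin m)) (g : Fin m → (Fin m → Bool) → X),
    (((2 : ℝ) ^ m)⁻¹ * ∑ δ : Fin m → Bool,
        (cubeLpNorm m p fun ε => ∑ i : Fin m, sgn (δ i) • Epi m π ((i : ℕ) + 1) (g i) ε) ^ p) ^ (1 / p)
      ≤ s * (((2 : ℝ) ^ m)⁻¹ * ∑ δ : Fin m → Bool,
        (cubeLpNorm m p fun ε => ∑ i : Fin m, sgn (δ i) • g i ε) ^ p) ^ (1 / p)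

/-- `X` satisfies the hypercube UMD⁻ inequality with constant `b` for exponent `p`. -/
def UMDminusIneq (X : Type*) [NormedAddCommGroup X] [NormedSpace ℝ X] (p b : ℝ) : Prop :=
  ∀ m : ℕ, 0 < m → ∀ (π : Equiv.Perm (Fin m)) (d : Fin m → (Fin m → Bool) → X),
    (∀ i : Fin m, Epi m π ((i : ℕ) + 1) (d i) = d i ∧ Epi m π (i : ℕ) (d i) = 0) →
    cubeLpNorm m p (fun ε => ∑ i : Fin m, d i ε)
      ≤ b * (((2 : ℝ) ^ m)⁻¹ * ∑ δ : Fin m → Bool,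
        (cubeLpNorm m p fun ε => ∑ i : Fin m, sgn (δ i) • d i ε) ^ p) ^ (1 / p)

/-- The Walsh function `w_A`. -/
def walsh (n : ℕ) (A : Finset (Fin n)) (ε : Fin n → Bool) : ℝ := ∏ i ∈ A, sgn (ε i)

/-- The Walsh coefficient `f̂(A)`. -/
def walshCoeff (n : ℕ) (f : (Fin n → Bool) → X) (A : Finset (Fin n)) : X :=
  ((2 : ℝ) ^ n)⁻¹ • ∑ ε : Fin n → Bool, walsh n A ε • f ε

/-- `Δ⁻¹∂_i f = Σ_{A ∋ i} |A|⁻¹ f̂(A) w_A`. -/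
def invLapDeriv (n : ℕ) (i : Fin n) (f : (Fin n → Bool) → X) : (Fin n → Bool) → X :=
  fun ε => ∑ A ∈ univ.filter (fun A : Finset (Fin n) => i ∈ A),
    ((A.card : ℝ)⁻¹ * walsh n A ε) • walshCoeff n f A

namespace SteinAux

lemma sgn_sq (b : Bool) : sgn b * sgn b = 1 := by cases b <;> norm_num [sgn]
lemma abs_sgn (b : Bool) : |sgn b| = 1 := by cases b <;> norm_num [sgn]

def q (a b : Bool) : ℝ := 1 + sgn a * sgn b
def qI (a b : Bool) : ℝ := if a = b then (1:ℝ) else 0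

lemma q_nonneg (a b : Bool) : 0 ≤ q a b := by cases a <;> cases b <;> norm_num [q, sgn]
lemma q_sum_fst (x : Bool) : q true x + q false x = 2 := by cases x <;> norm_num [q, sgn]
lemma q_sum_snd (a : Bool) : q a true + q a false = 2 := by cases a <;> norm_num [q, sgn]
lemma qI_sum_snd (a : Bool) : qI a true + qI a false = 1 := by cases a <;> norm_num [qI]
lemma qqI_sum_snd (a : Bool) : q a true * qI a true + q a false * qI a false = 2 := by
  cases a <;> norm_num [q, qI, sgn]
lemma qI_nonneg (a b : Bool) : 0 ≤ qI a b := by cases a <;> cases b <;> norm_num [qI]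
lemma qI_le_one (a b : Bool) : qI a b ≤ 1 := by cases a <;> cases b <;> norm_num [qI]

lemma sum_prod_bool {n : ℕ} (c : Fin n → Bool → ℝ) :
    ∑ η : Fin n → Bool, ∏ j, c j (η j) = ∏ j, (c j true + c j false) := by
  classical
  have h := Finset.prod_univ_sum (fun _ : Fin n => (Finset.univ : Finset Bool)) (fun j b => c j b)
  rw [Fintype.piFinset_univ] at h
  rw [← h]
  exact Finset.prod_congr rfl fun j _ => by rw [Fintype.sum_bool]

lemma sum_prod_eval {n : ℕ} (c : Fin n → Bool → ℝ) (v : Fin n → ℝ)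
    (h : ∀ j, c j true + c j false = 2 * v j) :
    ∑ η : Fin n → Bool, ∏ j, c j (η j) = 2 ^ n * ∏ j, v j := by
  rw [sum_prod_bool]
  calc ∏ j, (c j true + c j false) = ∏ j : Fin n, (2 * v j) := Finset.prod_congr rfl fun j _ => h j
  _ = 2 ^ n * ∏ j, v j := by
      rw [Finset.prod_mul_distrib, Finset.prod_const, Finset.card_univ, Fintype.card_fin]

lemma sum_filter_prod {n : ℕ} (S : Finset (Fin n)) (ε : Fin n → Bool) (c : Fin n → Bool → ℝ) :
    ∑ η ∈ univ.filter (fun η : Fin n → Bool => ∀ j ∈ S, η j = ε j), ∏ j, c j (η j)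
      = (∏ j ∈ S, c j (ε j)) * ∏ j ∈ Sᶜ, (c j true + c j false) := by
  classical
  rw [Finset.sum_filter]
  have key : ∀ η : Fin n → Bool,
      (if (∀ j ∈ S, η j = ε j) then ∏ j, c j (η j) else 0)
        = ∏ j, (fun j b => if j ∈ S then (if b = ε j then c j b else 0) else c j b) j (η j) := by
    intro η
    by_cases hP : ∀ j ∈ S, η j = ε j
    · rw [if_pos hP]
      refine Finset.prod_congr rfl fun j _ => ?_
      by_cases hjS : j ∈ S
      · simp only [hjS, if_true, hP j hjS, if_pos]
      · simp only [hjS, if_false]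
    · rw [if_neg hP]
      push_neg at hP
      obtain ⟨j₀, hj₀S, hne⟩ := hP
      refine (Finset.prod_eq_zero (Finset.mem_univ j₀) ?_).symm
      simp only [hj₀S, if_true, hne, if_false]
  rw [Finset.sum_congr rfl fun η _ => key η,
    sum_prod_bool (fun j b => if j ∈ S then (if b = ε j then c j b else 0) else c j b)]
  rw [← Finset.prod_mul_prod_compl S]
  congr 1
  · refine Finset.prod_congr rfl fun j hj => ?_
    simp only [hj, if_true]
    cases hεj : ε j <;> simp [hεj]
  · refine Finset.prod_congr rfl fun j hj => ?_
    rw [Finset.mem_compl] at hj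
    simp only [hj, if_false]

lemma condExp_prod {n : ℕ} (S : Finset (Fin n)) (d : Fin n → Bool → ℝ) :
    cubeCondExp n S (fun ε => ∏ j, d j (ε j))
      = fun ε => (∏ j ∈ S, d j (ε j)) * ∏ j ∈ Sᶜ, ((d j true + d j false) / 2) := by
  funext ε
  unfold cubeCondExp
  rw [smul_eq_mul, sum_filter_prod]
  have hc : (Sᶜ).card = n - S.card := by
    rw [Finset.card_compl, Fintype.card_fin]
  have h2 : ∏ j ∈ Sᶜ, ((d j true + d j false) / 2)
      = (∏ j ∈ Sᶜ, (d j true + d j false)) / 2 ^ (n - S.card) := by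
    rw [Finset.prod_div_distrib, Finset.prod_const, hc]
  rw [h2]
  have : ((2:ℝ) ^ (n - S.card)) ≠ 0 := by positivity
  field_simp

lemma condExp_zero {n : ℕ} (S : Finset (Fin n)) :
    cubeCondExp n S (fun _ => (0:X)) = fun _ => 0 := by
  funext ε; unfold cubeCondExp; simp

lemma condExp_J {n : ℕ} (J : ((Fin n → Bool) → ℝ) →ₗ[ℝ] X) (S : Finset (Fin n))
    (g : (Fin n → Bool) → (Fin n → Bool) → ℝ) :
    cubeCondExp n S (fun ε => J (g ε)) = fun ε => J (cubeCondExp n S g ε) := by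
  funext ε
  unfold cubeCondExp
  rw [map_smul, map_sum]

lemma condExp_apply {n : ℕ} (S : Finset (Fin n)) (g : (Fin n → Bool) → (Fin n → Bool) → ℝ)
    (ε η : Fin n → Bool) :
    cubeCondExp n S g ε η = cubeCondExp n S (fun ε' => g ε' η) ε := by
  unfold cubeCondExp
  simp [Finset.sum_apply, smul_eq_mul]


def Pp (n : ℕ) (ε η : Fin n → Bool) : ℝ :=
  ∏ j : Fin n, (if (j:ℕ) % 2 = 1 then q (ε j) (η j) else 1)

def Aa (n : ℕ) (i : ℕ) (ε η : Fin n → Bool) : ℝ :=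
  ∏ j : Fin n, (if ((j:ℕ) % 2 = 1 ∧ (j:ℕ) < i + 1) then q (ε j) (η j) else 1)

def Mm (n : ℕ) (k : ℕ) (ε η : Fin n → Bool) : ℝ :=
  ∏ j : Fin n, (if ((j:ℕ) % 2 = 1 ∧ (j:ℕ) < k) then qI (ε j) (η j) else 1)

def hh (n : ℕ) (i : Fin n) (ε : Fin n → Bool) : (Fin n → Bool) → ℝ :=
  fun η => if (i:ℕ) % 2 = 0 then sgn (η i) * Pp n ε η else 0

def gg (n : ℕ) (i : Fin n) (ε : Fin n → Bool) : (Fin n → Bool) → ℝ :=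
  fun η => if (i:ℕ) % 2 = 0 then sgn (η i) * Aa n (i:ℕ) ε η else 0

variable {n : ℕ} (ε : Fin n → Bool)

lemma Pp_nonneg (η : Fin n → Bool) : 0 ≤ Pp n ε η := by
  unfold Pp
  refine Finset.prod_nonneg fun j _ => ?_
  by_cases h : (j:ℕ) % 2 = 1 <;> simp [h, q_nonneg]

lemma sum_Pp : ∑ η : Fin n → Bool, Pp n ε η = 2 ^ n := by
  refine Eq.trans (sum_prod_eval (fun (j : Fin n) (b : Bool) =>
    if (j:ℕ) % 2 = 1 then q (ε j) b else 1) (fun _ => 1) ?_) (by simp)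
  intro j
  by_cases h : (j:ℕ) % 2 = 1 <;> norm_num [h, q_sum_snd]

lemma sum_Aa (i : ℕ) : ∑ η : Fin n → Bool, Aa n i ε η = 2 ^ n := by
  refine Eq.trans (sum_prod_eval (fun (j : Fin n) (b : Bool) =>
    if ((j:ℕ) % 2 = 1 ∧ (j:ℕ) < i + 1) then q (ε j) b else 1) (fun _ => 1) ?_) (by simp)
  intro j
  by_cases h : ((j:ℕ) % 2 = 1 ∧ (j:ℕ) < i + 1)
  · rw [if_pos h, if_pos h]; norm_num [q_sum_snd]
  · rw [if_neg h, if_neg h]; norm_num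

lemma AM_prod (ki l : ℕ) (η : Fin n → Bool) : Aa n ki ε η * Mm n l ε η
    = ∏ j : Fin n, ((if ((j:ℕ) % 2 = 1 ∧ (j:ℕ) < ki + 1) then q (ε j) (η j) else 1) *
        (if ((j:ℕ) % 2 = 1 ∧ (j:ℕ) < l) then qI (ε j) (η j) else 1)) := by
  unfold Aa Mm
  rw [← Finset.prod_mul_distrib]

lemma sum_AM_same (k : ℕ) :
    ∑ η : Fin n → Bool, Aa n (2*k) ε η * Mm n (2*k) ε η = 2 ^ n := by
  rw [Finset.sum_congr rfl fun η _ => AM_prod ε (2*k) (2*k) η]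
  refine Eq.trans (sum_prod_eval (fun (j : Fin n) (b : Bool) =>
      (if ((j:ℕ) % 2 = 1 ∧ (j:ℕ) < 2*k + 1) then q (ε j) b else 1) *
      (if ((j:ℕ) % 2 = 1 ∧ (j:ℕ) < 2*k) then qI (ε j) b else 1)) (fun _ => 1) ?_) (by simp)
  intro j
  by_cases h2 : (j:ℕ) % 2 = 1
  · by_cases hk : (j:ℕ) < 2*k
    · have h1 : (j:ℕ) < 2*k+1 := by omega
      norm_num [h2, hk, h1, qqI_sum_snd]
    · have h1 : ¬ ((j:ℕ) < 2*k + 1) := by omega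
      norm_num [h2, hk, h1, q_sum_snd]
  · norm_num [h2]

lemma sum_AM_next (k : ℕ) (hk : 2*k + 1 < n) :
    ∑ η : Fin n → Bool, Aa n (2*k) ε η * Mm n (2*k+2) ε η = 2 ^ n / 2 := by
  rw [Finset.sum_congr rfl fun η _ => AM_prod ε (2*k) (2*k+2) η]
  refine Eq.trans (sum_prod_eval (fun (j : Fin n) (b : Bool) =>
      (if ((j:ℕ) % 2 = 1 ∧ (j:ℕ) < 2*k + 1) then q (ε j) b else 1) *
      (if ((j:ℕ) % 2 = 1 ∧ (j:ℕ) < 2*k+2) then qI (ε j) b else 1))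
      (fun j => if j = (⟨2*k+1, hk⟩ : Fin n) then 1/2 else 1) ?_) ?_
  · intro j
    by_cases hj : j = (⟨2*k+1, hk⟩ : Fin n)
    · subst hj
      have h2 : ((2*k+1 : ℕ)) % 2 = 1 := by omega
      have hlt1 : ¬ ((2*k+1 : ℕ) < 2*k+1) := by omega
      have hlt2 : (2*k+1 : ℕ) < 2*k+2 := by omega
      norm_num [h2, hlt1, hlt2, qI_sum_snd]
    · rw [if_neg hj]
      have hj' : (j:ℕ) ≠ 2*k+1 := fun h => hj (Fin.ext h)
      by_cases h2 : (j:ℕ) % 2 = 1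
      · by_cases hlt : (j:ℕ) < 2*k
        · have ha : (j:ℕ) < 2*k+1 := by omega
          have hb : (j:ℕ) < 2*k+2 := by omega
          norm_num [h2, ha, hb, qqI_sum_snd]
        · have ha : ¬ ((j:ℕ) < 2*k+1) := by omega
          have hb : ¬ ((j:ℕ) < 2*k+2) := by omega
          norm_num [h2, ha, hb, q_sum_snd]
      · norm_num [h2]
  · rw [Finset.prod_ite_eq' Finset.univ (⟨2*k+1, hk⟩ : Fin n) (fun _ => (1/2 : ℝ))]
    simp only [Finset.mem_univ, if_true]
    ring

lemma Mm_stable (k : ℕ) (hk : n ≤ 2*k+1) (η : Fin n → Bool) :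
    Mm n (2*k+2) ε η = Mm n (2*k) ε η := by
  unfold Mm
  refine Finset.prod_congr rfl fun j _ => ?_
  have hj : (j:ℕ) < n := j.isLt
  have : ((j:ℕ) % 2 = 1 ∧ (j:ℕ) < 2*k+2) ↔ ((j:ℕ) % 2 = 1 ∧ (j:ℕ) < 2*k) := by
    constructor
    · rintro ⟨h1, h2⟩; exact ⟨h1, by omega⟩
    · rintro ⟨h1, h2⟩; exact ⟨h1, by omega⟩
  simp only [this]


lemma sum_sgn_pair (i i' : Fin n) (hne : i ≠ i') (u : Fin n → Bool → ℝ)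
    (hui : ∀ b, u i b = 1) (hui' : ∀ b, u i' b = 1) :
    ∑ η : Fin n → Bool, (sgn (η i) * sgn (η i')) * ∏ j : Fin n, u j (η j) = 0 := by
  have key : ∀ η : Fin n → Bool, (sgn (η i) * sgn (η i')) * ∏ j : Fin n, u j (η j)
      = ∏ j : Fin n, ((if j = i then sgn (η j) else 1) * (if j = i' then sgn (η j) else 1)
          * u j (η j)) := by
    intro η
    rw [Finset.prod_mul_distrib, Finset.prod_mul_distrib,
      Finset.prod_ite_eq' Finset.univ i (fun j => sgn (η j)),
      Finset.prod_ite_eq' Finset.univ i' (fun j => sgn (η j))]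
    simp [mul_assoc]
  rw [Finset.sum_congr rfl fun η _ => key η]
  refine Eq.trans (sum_prod_eval (fun (j : Fin n) (b : Bool) =>
      (if j = i then sgn b else 1) * (if j = i' then sgn b else 1) * u j b)
      (fun j => if j = i then 0 else if j = i' then 0 else (u j true + u j false) / 2) ?_) ?_
  · intro j
    by_cases hji : j = i
    · subst hji
      simp [hne, hui, sgn]
    · by_cases hji' : j = i'
      · subst hji'
        simp [hji, hui', sgn]
      · simp only [hji, hji', if_false, one_mul]
        ring
  · rw [Finset.prod_eq_zero (Finset.mem_univ i) (by simp)]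
    ring

lemma sum_sgn_diag (i : Fin n) (u : Fin n → Bool → ℝ) :
    ∑ η : Fin n → Bool, (sgn (η i) * sgn (η i)) * ∏ j : Fin n, u j (η j)
      = ∑ η : Fin n → Bool, ∏ j : Fin n, u j (η j) := by
  refine Finset.sum_congr rfl fun η _ => ?_
  rw [sgn_sq, one_mul]

lemma sum_hh_pair (i i' : Fin n) (hi' : (i':ℕ) % 2 = 0) :
    ∑ η : Fin n → Bool, hh n i ε η * sgn (η i') = if i = i' then 2 ^ n else 0 := by
  unfold hh
  by_cases hi : (i:ℕ) % 2 = 0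
  · simp only [hi, if_true]
    have key : ∀ η : Fin n → Bool, sgn (η i) * Pp n ε η * sgn (η i')
        = (sgn (η i) * sgn (η i')) * ∏ j : Fin n,
            (fun (j : Fin n) (b : Bool) => if (j:ℕ) % 2 = 1 then q (ε j) b else 1) j (η j) := by
      intro η
      have hP : Pp n ε η = ∏ j : Fin n,
          (fun (j : Fin n) (b : Bool) => if (j:ℕ) % 2 = 1 then q (ε j) b else 1) j (η j) := rfl
      rw [← hP]; ring
    rw [Finset.sum_congr rfl fun η _ => key η]
    by_cases hii : i = i'
    · subst hii
      rw [if_pos rfl,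
        sum_sgn_diag i (fun (j : Fin n) (b : Bool) => if (j:ℕ) % 2 = 1 then q (ε j) b else 1)]
      exact sum_Pp ε
    · rw [if_neg hii]
      have hno : ¬ ((i:ℕ) % 2 = 1) := by omega
      have hno' : ¬ ((i':ℕ) % 2 = 1) := by omega
      exact sum_sgn_pair i i' hii
        (fun (j : Fin n) (b : Bool) => if (j:ℕ) % 2 = 1 then q (ε j) b else 1)
        (fun b => by simp [hno]) (fun b => by simp [hno'])
  · have hii : i ≠ i' := by intro h; rw [h] at hi; exact hi hi'
    rw [if_neg hii]
    simp [hi]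

lemma sum_gg_pair (i i' : Fin n) (hi' : (i':ℕ) % 2 = 0) :
    ∑ η : Fin n → Bool, gg n i ε η * sgn (η i') = if i = i' then 2 ^ n else 0 := by
  unfold gg
  by_cases hi : (i:ℕ) % 2 = 0
  · simp only [hi, if_true]
    have key : ∀ η : Fin n → Bool, sgn (η i) * Aa n (i:ℕ) ε η * sgn (η i')
        = (sgn (η i) * sgn (η i')) * ∏ j : Fin n,
            (fun (j : Fin n) (b : Bool) =>
              if ((j:ℕ) % 2 = 1 ∧ (j:ℕ) < (i:ℕ) + 1) then q (ε j) b else 1) j (η j) := by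
      intro η
      have hA : Aa n (i:ℕ) ε η = ∏ j : Fin n,
          (fun (j : Fin n) (b : Bool) =>
            if ((j:ℕ) % 2 = 1 ∧ (j:ℕ) < (i:ℕ) + 1) then q (ε j) b else 1) j (η j) := rfl
      rw [← hA]; ring
    rw [Finset.sum_congr rfl fun η _ => key η]
    by_cases hii : i = i'
    · subst hii
      rw [if_pos rfl,
        sum_sgn_diag i (fun (j : Fin n) (b : Bool) =>
          if ((j:ℕ) % 2 = 1 ∧ (j:ℕ) < (i:ℕ) + 1) then q (ε j) b else 1)]
      exact sum_Aa ε (i:ℕ)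
    · rw [if_neg hii]
      have hno : ¬ ((i:ℕ) % 2 = 1) := by omega
      have hno' : ¬ ((i':ℕ) % 2 = 1) := by omega
      exact sum_sgn_pair i i' hii
        (fun (j : Fin n) (b : Bool) =>
          if ((j:ℕ) % 2 = 1 ∧ (j:ℕ) < (i:ℕ) + 1) then q (ε j) b else 1)
        (fun b => by simp [hno]) (fun b => by simp [hno'])
  · have hii : i ≠ i' := by intro h; rw [h] at hi; exact hi hi'
    rw [if_neg hii]
    simp [hi]

lemma sum_ggM_pair (i i' : Fin n) (hi' : (i':ℕ) % 2 = 0) (l : ℕ) :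
    ∑ η : Fin n → Bool, gg n i ε η * (sgn (η i') * Mm n l ε η)
      = if i = i' then ∑ η : Fin n → Bool, Aa n (i:ℕ) ε η * Mm n l ε η else 0 := by
  unfold gg
  by_cases hi : (i:ℕ) % 2 = 0
  · simp only [hi, if_true]
    have key : ∀ η : Fin n → Bool, sgn (η i) * Aa n (i:ℕ) ε η * (sgn (η i') * Mm n l ε η)
        = (sgn (η i) * sgn (η i')) * ∏ j : Fin n,
            (fun (j : Fin n) (b : Bool) =>
              (if ((j:ℕ) % 2 = 1 ∧ (j:ℕ) < (i:ℕ) + 1) then q (ε j) b else 1) *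
              (if ((j:ℕ) % 2 = 1 ∧ (j:ℕ) < l) then qI (ε j) b else 1)) j (η j) := by
      intro η
      have hAM := AM_prod ε (i:ℕ) l η
      have : (∏ j : Fin n,
          (fun (j : Fin n) (b : Bool) =>
            (if ((j:ℕ) % 2 = 1 ∧ (j:ℕ) < (i:ℕ) + 1) then q (ε j) b else 1) *
            (if ((j:ℕ) % 2 = 1 ∧ (j:ℕ) < l) then qI (ε j) b else 1)) j (η j))
          = Aa n (i:ℕ) ε η * Mm n l ε η := hAM.symm
      rw [this]; ring
    rw [Finset.sum_congr rfl fun η _ => key η]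
    by_cases hii : i = i'
    · subst hii
      rw [if_pos rfl,
        sum_sgn_diag i (fun (j : Fin n) (b : Bool) =>
          (if ((j:ℕ) % 2 = 1 ∧ (j:ℕ) < (i:ℕ) + 1) then q (ε j) b else 1) *
          (if ((j:ℕ) % 2 = 1 ∧ (j:ℕ) < l) then qI (ε j) b else 1))]
      exact Finset.sum_congr rfl fun η _ => (AM_prod ε (i:ℕ) l η).symm
    · rw [if_neg hii]
      have hno : ¬ ((i:ℕ) % 2 = 1) := by omega
      have hno' : ¬ ((i':ℕ) % 2 = 1) := by omega
      exact sum_sgn_pair i i' hii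
        (fun (j : Fin n) (b : Bool) =>
          (if ((j:ℕ) % 2 = 1 ∧ (j:ℕ) < (i:ℕ) + 1) then q (ε j) b else 1) *
          (if ((j:ℕ) % 2 = 1 ∧ (j:ℕ) < l) then qI (ε j) b else 1))
        (fun b => by simp [hno]) (fun b => by simp [hno'])
  · have hii : i ≠ i' := by intro h; rw [h] at hi; exact hi hi'
    rw [if_neg hii]
    simp [hi]

lemma Mm_nonneg (k : ℕ) (η : Fin n → Bool) : 0 ≤ Mm n k ε η := by
  unfold Mm
  refine Finset.prod_nonneg fun j _ => ?_
  by_cases h : ((j:ℕ) % 2 = 1 ∧ (j:ℕ) < k) <;> simp [h, qI_nonneg]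

lemma Mm_zero (η : Fin n → Bool) : Mm n 0 ε η = 1 := by
  unfold Mm
  refine Finset.prod_eq_one fun j _ => ?_
  simp

lemma Mm_antitone {k l : ℕ} (hkl : k ≤ l) (η : Fin n → Bool) :
    Mm n l ε η ≤ Mm n k ε η := by
  unfold Mm
  refine Finset.prod_le_prod (fun j _ => ?_) (fun j _ => ?_)
  · by_cases h : ((j:ℕ) % 2 = 1 ∧ (j:ℕ) < l) <;> simp [h, qI_nonneg]
  · by_cases hl : ((j:ℕ) % 2 = 1 ∧ (j:ℕ) < l)
    · rw [if_pos hl]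
      by_cases hk : ((j:ℕ) % 2 = 1 ∧ (j:ℕ) < k)
      · rw [if_pos hk]
      · rw [if_neg hk]; exact qI_le_one _ _
    · rw [if_neg hl]
      have hk : ¬ ((j:ℕ) % 2 = 1 ∧ (j:ℕ) < k) := by
        intro ⟨h1, h2⟩; exact hl ⟨h1, by omega⟩
      rw [if_neg hk]


def Sg (n : ℕ) (δ η : Fin n → Bool) : ℝ :=
  ∑ i : Fin n, (if (i:ℕ) % 2 = 0 then sgn (δ i) * sgn (η i) else 0)

def RSfun (n : ℕ) (δ ε : Fin n → Bool) : (Fin n → Bool) → ℝ :=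
  fun η => ∑ i : Fin n, sgn (δ i) * hh n i ε η

def LSfun (n : ℕ) (δ ε : Fin n → Bool) : (Fin n → Bool) → ℝ :=
  fun η => ∑ i : Fin n, sgn (δ i) * gg n i ε η

def Gfun (n : ℕ) (δ ε : Fin n → Bool) : (Fin n → Bool) → ℝ :=
  fun η => ∑ k ∈ Finset.range n,
    (if h : 2*k < n then
      sgn (δ ⟨2*k, h⟩) * sgn (η ⟨2*k, h⟩) * (Mm n (2*k) ε η - Mm n (2*k+2) ε η)
    else 0)

variable (δ : Fin n → Bool)

lemma RS_eq (η : Fin n → Bool) : RSfun n δ ε η = Sg n δ η * Pp n ε η := by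
  unfold RSfun Sg
  rw [Finset.sum_mul]
  refine Finset.sum_congr rfl fun i _ => ?_
  unfold hh
  by_cases hi : (i:ℕ) % 2 = 0 <;> simp [hi] <;> ring

lemma sum_RS_sgn (i' : Fin n) (hi' : (i':ℕ) % 2 = 0) :
    ∑ η : Fin n → Bool, RSfun n δ ε η * sgn (η i') = sgn (δ i') * 2 ^ n := by
  unfold RSfun
  have : ∀ η : Fin n → Bool, (∑ i : Fin n, sgn (δ i) * hh n i ε η) * sgn (η i')
      = ∑ i : Fin n, sgn (δ i) * (hh n i ε η * sgn (η i')) := by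
    intro η; rw [Finset.sum_mul]; exact Finset.sum_congr rfl fun i _ => by ring
  rw [Finset.sum_congr rfl fun η _ => this η, Finset.sum_comm]
  have : ∀ i : Fin n, ∑ η : Fin n → Bool, sgn (δ i) * (hh n i ε η * sgn (η i'))
      = sgn (δ i) * (if i = i' then 2^n else 0) := by
    intro i
    rw [← Finset.mul_sum, sum_hh_pair ε i i' hi']
  rw [Finset.sum_congr rfl fun i _ => this i]
  rw [Finset.sum_eq_single i' (fun i _ hne => by rw [if_neg hne, mul_zero])
    (fun h => absurd (Finset.mem_univ i') h)]
  rw [if_pos rfl]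

lemma sum_LS_sgn (i' : Fin n) (hi' : (i':ℕ) % 2 = 0) :
    ∑ η : Fin n → Bool, LSfun n δ ε η * sgn (η i') = sgn (δ i') * 2 ^ n := by
  unfold LSfun
  have : ∀ η : Fin n → Bool, (∑ i : Fin n, sgn (δ i) * gg n i ε η) * sgn (η i')
      = ∑ i : Fin n, sgn (δ i) * (gg n i ε η * sgn (η i')) := by
    intro η; rw [Finset.sum_mul]; exact Finset.sum_congr rfl fun i _ => by ring
  rw [Finset.sum_congr rfl fun η _ => this η, Finset.sum_comm]
  have : ∀ i : Fin n, ∑ η : Fin n → Bool, sgn (δ i) * (gg n i ε η * sgn (η i'))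
      = sgn (δ i) * (if i = i' then 2^n else 0) := by
    intro i
    rw [← Finset.mul_sum, sum_gg_pair ε i i' hi']
  rw [Finset.sum_congr rfl fun i _ => this i]
  rw [Finset.sum_eq_single i' (fun i _ hne => by rw [if_neg hne, mul_zero])
    (fun h => absurd (Finset.mem_univ i') h)]
  rw [if_pos rfl]

lemma sum_LS_sgnM (i' : Fin n) (hi' : (i':ℕ) % 2 = 0) (l : ℕ) :
    ∑ η : Fin n → Bool, LSfun n δ ε η * (sgn (η i') * Mm n l ε η)
      = sgn (δ i') * ∑ η : Fin n → Bool, Aa n (i':ℕ) ε η * Mm n l ε η := by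
  unfold LSfun
  have : ∀ η : Fin n → Bool, (∑ i : Fin n, sgn (δ i) * gg n i ε η) * (sgn (η i') * Mm n l ε η)
      = ∑ i : Fin n, sgn (δ i) * (gg n i ε η * (sgn (η i') * Mm n l ε η)) := by
    intro η; rw [Finset.sum_mul]; exact Finset.sum_congr rfl fun i _ => by ring
  rw [Finset.sum_congr rfl fun η _ => this η, Finset.sum_comm]
  have : ∀ i : Fin n, ∑ η : Fin n → Bool, sgn (δ i) * (gg n i ε η * (sgn (η i') * Mm n l ε η))
      = sgn (δ i) * (if i = i'
          then ∑ η : Fin n → Bool, Aa n (i:ℕ) ε η * Mm n l ε η else 0) := by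
    intro i
    rw [← Finset.mul_sum, sum_ggM_pair ε i i' hi' l]
  rw [Finset.sum_congr rfl fun i _ => this i]
  rw [Finset.sum_eq_single i' (fun i _ hne => by rw [if_neg hne, mul_zero])
    (fun h => absurd (Finset.mem_univ i') h)]
  rw [if_pos rfl]

lemma abs_Sg_Pp (η : Fin n → Bool) :
    |RSfun n δ ε η| = Real.sqrt (Pp n ε η) * (Real.sqrt (Pp n ε η) * |Sg n δ η|) := by
  have hm : Real.sqrt (Pp n ε η) * Real.sqrt (Pp n ε η) = Pp n ε η :=
    Real.mul_self_sqrt (Pp_nonneg ε η)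
  rw [RS_eq, abs_mul, abs_of_nonneg (Pp_nonneg ε η)]
  linear_combination (-|Sg n δ η|) * hm

lemma sum_RS_Sg :
    ∑ η : Fin n → Bool, RSfun n δ ε η * Sg n δ η ≤ (n:ℝ) * 2 ^ n := by
  unfold Sg
  have : ∀ η : Fin n → Bool, RSfun n δ ε η *
        (∑ i : Fin n, (if (i:ℕ) % 2 = 0 then sgn (δ i) * sgn (η i) else 0))
      = ∑ i : Fin n, (if (i:ℕ) % 2 = 0
          then sgn (δ i) * (RSfun n δ ε η * sgn (η i)) else 0) := by
    intro η
    rw [Finset.mul_sum]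
    refine Finset.sum_congr rfl fun i _ => ?_
    by_cases hi : (i:ℕ) % 2 = 0 <;> simp [hi] <;> ring
  rw [Finset.sum_congr rfl fun η _ => this η, Finset.sum_comm]
  have : ∀ i : Fin n, (∑ η : Fin n → Bool, (if (i:ℕ) % 2 = 0
          then sgn (δ i) * (RSfun n δ ε η * sgn (η i)) else 0))
      = (if (i:ℕ) % 2 = 0 then (2:ℝ)^n else 0) := by
    intro i
    by_cases hi : (i:ℕ) % 2 = 0
    · simp only [hi, if_true]
      rw [← Finset.mul_sum, sum_RS_sgn ε δ i hi, ← mul_assoc, sgn_sq, one_mul]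
    · simp [hi]
  rw [Finset.sum_congr rfl fun i _ => this i]
  calc ∑ i : Fin n, (if (i:ℕ) % 2 = 0 then (2:ℝ)^n else 0)
      ≤ ∑ _i : Fin n, (2:ℝ)^n := by
        refine Finset.sum_le_sum fun i _ => ?_
        by_cases hi : (i:ℕ) % 2 = 0 <;> simp [hi] <;> positivity
  _ = (n:ℝ) * 2^n := by simp [Finset.card_univ, mul_comm]

lemma sum_abs_RS_le : ∑ η : Fin n → Bool, |RSfun n δ ε η| ≤ 2^n * Real.sqrt n := by
  rw [Finset.sum_congr rfl fun η _ => abs_Sg_Pp ε δ η]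
  have hCS := Finset.sum_mul_sq_le_sq_mul_sq Finset.univ
    (fun η : Fin n → Bool => Real.sqrt (Pp n ε η))
    (fun η : Fin n → Bool => Real.sqrt (Pp n ε η) * |Sg n δ η|)
  have h1 : ∑ η : Fin n → Bool, (Real.sqrt (Pp n ε η))^2 = 2^n := by
    rw [Finset.sum_congr rfl fun η _ => Real.sq_sqrt (Pp_nonneg ε η)]
    exact sum_Pp ε
  have h2 : ∑ η : Fin n → Bool, (Real.sqrt (Pp n ε η) * |Sg n δ η|)^2 ≤ (n:ℝ) * 2^n := by
    have : ∀ η : Fin n → Bool, (Real.sqrt (Pp n ε η) * |Sg n δ η|)^2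
        = RSfun n δ ε η * Sg n δ η := by
      intro η
      rw [mul_pow, Real.sq_sqrt (Pp_nonneg ε η), sq_abs, RS_eq]
      ring
    rw [Finset.sum_congr rfl fun η _ => this η]
    exact sum_RS_Sg ε δ
  have hnn : (0:ℝ) ≤ ∑ η : Fin n → Bool,
      Real.sqrt (Pp n ε η) * (Real.sqrt (Pp n ε η) * |Sg n δ η|) := by
    refine Finset.sum_nonneg fun η _ => ?_
    positivity
  have hsq : (∑ η : Fin n → Bool,
      Real.sqrt (Pp n ε η) * (Real.sqrt (Pp n ε η) * |Sg n δ η|))^2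
      ≤ 2^n * ((n:ℝ) * 2^n) := by
    refine le_trans hCS ?_
    rw [h1]
    exact mul_le_mul_of_nonneg_left h2 (by positivity)
  have h2n : ((2:ℝ)^n * Real.sqrt n)^2 = 2^n * ((n:ℝ) * 2^n) := by
    rw [mul_pow, Real.sq_sqrt (Nat.cast_nonneg n)]
    ring
  have hb : (0:ℝ) ≤ 2^n * Real.sqrt n := by positivity
  calc ∑ η : Fin n → Bool, Real.sqrt (Pp n ε η) * (Real.sqrt (Pp n ε η) * |Sg n δ η|)
      = Real.sqrt ((∑ η : Fin n → Bool,
          Real.sqrt (Pp n ε η) * (Real.sqrt (Pp n ε η) * |Sg n δ η|))^2) :=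
        (Real.sqrt_sq hnn).symm
  _ ≤ Real.sqrt (2^n * ((n:ℝ) * 2^n)) := Real.sqrt_le_sqrt hsq
  _ = 2^n * Real.sqrt n := by rw [← h2n, Real.sqrt_sq hb]


lemma abs_G_le_one (η : Fin n → Bool) : |Gfun n δ ε η| ≤ 1 := by
  unfold Gfun
  calc |∑ k ∈ Finset.range n, (if h : 2*k < n then
          sgn (δ ⟨2*k, h⟩) * sgn (η ⟨2*k, h⟩) * (Mm n (2*k) ε η - Mm n (2*k+2) ε η) else 0)|
      ≤ ∑ k ∈ Finset.range n, |(if h : 2*k < n then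
          sgn (δ ⟨2*k, h⟩) * sgn (η ⟨2*k, h⟩) * (Mm n (2*k) ε η - Mm n (2*k+2) ε η) else 0)| :=
        Finset.abs_sum_le_sum_abs _ _
  _ ≤ ∑ k ∈ Finset.range n, (Mm n (2*k) ε η - Mm n (2*(k+1)) ε η) := by
      refine Finset.sum_le_sum fun k _ => ?_
      have hd : 0 ≤ Mm n (2*k) ε η - Mm n (2*(k+1)) ε η :=
        sub_nonneg.mpr (Mm_antitone ε (by omega) η)
      have h22 : 2*(k+1) = 2*k+2 := by ring
      by_cases h : 2*k < n
      · rw [dif_pos h, abs_mul, abs_mul, abs_sgn, abs_sgn, one_mul, one_mul, h22]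
        rw [abs_of_nonneg (by rw [← h22]; exact hd)]
      · rw [dif_neg h, abs_zero]
        exact hd
  _ = Mm n (2*0) ε η - Mm n (2*n) ε η :=
      Finset.sum_range_sub' (fun k => Mm n (2*k) ε η) n
  _ ≤ 1 := by
      have h0 : Mm n (2*0) ε η = 1 := Mm_zero ε η
      have h1 : 0 ≤ Mm n (2*n) ε η := Mm_nonneg ε _ η
      linarith

lemma sum_LS_G :
    ∑ η : Fin n → Bool, LSfun n δ ε η * Gfun n δ ε η = ((n/2 : ℕ) : ℝ) * (2^n / 2) := by
  unfold Gfun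
  have hswap : ∑ η : Fin n → Bool, LSfun n δ ε η * (∑ k ∈ Finset.range n, (if h : 2*k < n then
        sgn (δ ⟨2*k, h⟩) * sgn (η ⟨2*k, h⟩) * (Mm n (2*k) ε η - Mm n (2*k+2) ε η) else 0))
      = ∑ k ∈ Finset.range n, ∑ η : Fin n → Bool, LSfun n δ ε η * (if h : 2*k < n then
        sgn (δ ⟨2*k, h⟩) * sgn (η ⟨2*k, h⟩) * (Mm n (2*k) ε η - Mm n (2*k+2) ε η) else 0) := by
    rw [Finset.sum_congr rfl fun η _ => Finset.mul_sum _ _ _]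
    exact Finset.sum_comm
  rw [hswap]
  have hk : ∀ k ∈ Finset.range n, (∑ η : Fin n → Bool, LSfun n δ ε η * (if h : 2*k < n then
        sgn (δ ⟨2*k, h⟩) * sgn (η ⟨2*k, h⟩) * (Mm n (2*k) ε η - Mm n (2*k+2) ε η) else 0))
      = (if 2*k+1 < n then (2:ℝ)^n / 2 else 0) := by
    intro k _
    by_cases h : 2*k < n
    · set c : Fin n := ⟨2*k, h⟩ with hc
      have hceven : ((c:ℕ)) % 2 = 0 := by simp [hc]
      have hsplit : ∀ η : Fin n → Bool, LSfun n δ ε η * (if h' : 2*k < n then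
            sgn (δ ⟨2*k, h'⟩) * sgn (η ⟨2*k, h'⟩) * (Mm n (2*k) ε η - Mm n (2*k+2) ε η) else 0)
          = sgn (δ c) * (LSfun n δ ε η * (sgn (η c) * Mm n (2*k) ε η))
            - sgn (δ c) * (LSfun n δ ε η * (sgn (η c) * Mm n (2*k+2) ε η)) := by
        intro η
        rw [dif_pos h]
        ring
      rw [Finset.sum_congr rfl fun η _ => hsplit η, Finset.sum_sub_distrib,
        ← Finset.mul_sum, ← Finset.mul_sum,
        sum_LS_sgnM ε δ c hceven (2*k), sum_LS_sgnM ε δ c hceven (2*k+2),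
        ← mul_assoc, ← mul_assoc, sgn_sq, one_mul, one_mul]
      have hcv : (c:ℕ) = 2*k := rfl
      rw [hcv]
      by_cases h2 : 2*k+1 < n
      · rw [if_pos h2, sum_AM_same ε k, sum_AM_next ε k h2]
        ring
      · rw [if_neg h2]
        have hstab : ∀ η : Fin n → Bool, Mm n (2*k+2) ε η = Mm n (2*k) ε η :=
          Mm_stable ε k (by omega)
        have heq : (∑ η : Fin n → Bool, Aa n (2*k) ε η * Mm n (2*k+2) ε η)
            = ∑ η : Fin n → Bool, Aa n (2*k) ε η * Mm n (2*k) ε η :=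
          Finset.sum_congr rfl fun η _ => by rw [hstab η]
        rw [heq]
        ring
    · have h2 : ¬ (2*k+1 < n) := by omega
      rw [if_neg h2]
      rw [Finset.sum_congr rfl fun η _ => by rw [dif_neg h, mul_zero]]
      exact Finset.sum_const_zero
  rw [Finset.sum_congr rfl hk, ← Finset.sum_filter]
  have hfil : (Finset.range n).filter (fun k => 2*k+1 < n) = Finset.range (n/2) := by
    ext k
    simp only [Finset.mem_filter, Finset.mem_range]
    omega
  rw [hfil, Finset.sum_const, Finset.card_range, nsmul_eq_mul]

lemma sum_abs_LS_ge_G :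
    ((n/2 : ℕ) : ℝ) * (2^n / 2) ≤ ∑ η : Fin n → Bool, |LSfun n δ ε η| := by
  rw [← sum_LS_G ε δ]
  refine Finset.sum_le_sum fun η _ => ?_
  calc LSfun n δ ε η * Gfun n δ ε η ≤ |LSfun n δ ε η * Gfun n δ ε η| := le_abs_self _
  _ = |LSfun n δ ε η| * |Gfun n δ ε η| := abs_mul _ _
  _ ≤ |LSfun n δ ε η| * 1 :=
      mul_le_mul_of_nonneg_left (abs_G_le_one ε δ η) (abs_nonneg _)
  _ = |LSfun n δ ε η| := mul_one _

lemma sum_abs_test (F : (Fin n → Bool) → ℝ) (hn : 0 < n)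
    (htest : ∑ η : Fin n → Bool, F η * sgn (η ⟨0, hn⟩) = sgn (δ ⟨0, hn⟩) * 2^n) :
    (2:ℝ)^n ≤ ∑ η : Fin n → Bool, |F η| := by
  have key : ∀ η : Fin n → Bool,
      sgn (δ ⟨0, hn⟩) * (F η * sgn (η ⟨0, hn⟩)) ≤ |F η| := by
    intro η
    calc sgn (δ ⟨0, hn⟩) * (F η * sgn (η ⟨0, hn⟩))
        ≤ |sgn (δ ⟨0, hn⟩) * (F η * sgn (η ⟨0, hn⟩))| := le_abs_self _
    _ = |F η| := by
        rw [abs_mul, abs_mul, abs_sgn, abs_sgn, one_mul, mul_one]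
  calc (2:ℝ)^n = sgn (δ ⟨0, hn⟩) * (sgn (δ ⟨0, hn⟩) * 2^n) := by
        rw [← mul_assoc, sgn_sq, one_mul]
  _ = ∑ η : Fin n → Bool, sgn (δ ⟨0, hn⟩) * (F η * sgn (η ⟨0, hn⟩)) := by
        rw [← Finset.mul_sum, htest]
  _ ≤ ∑ η : Fin n → Bool, |F η| := Finset.sum_le_sum fun η _ => key η

lemma sum_abs_LS_ge_one (hn : 0 < n) : (2:ℝ)^n ≤ ∑ η : Fin n → Bool, |LSfun n δ ε η| :=
  sum_abs_test δ _ hn (sum_LS_sgn ε δ ⟨0, hn⟩ (by simp))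

lemma sum_abs_RS_ge_one (hn : 0 < n) : (2:ℝ)^n ≤ ∑ η : Fin n → Bool, |RSfun n δ ε η| :=
  sum_abs_test δ _ hn (sum_RS_sgn ε δ ⟨0, hn⟩ (by simp))

end SteinAux

namespace SteinAux
variable {n : ℕ} (ε : Fin n → Bool)

lemma sgn_as_prod (i : Fin n) (η : Fin n → Bool) :
    sgn (η i) = ∏ j : Fin n, (if j = i then sgn (η j) else 1) := by
  rw [Finset.prod_ite_eq' Finset.univ i (fun j => sgn (η j))]
  simp

lemma hh_prod (i : Fin n) (hi : (i:ℕ) % 2 = 0) (η : Fin n → Bool) (ε' : Fin n → Bool) :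
    hh n i ε' η = ∏ j : Fin n,
      (fun (j : Fin n) (a : Bool) =>
        if (j:ℕ) % 2 = 1 then q a (η j) else if j = i then sgn (η j) else 1) j (ε' j) := by
  unfold hh Pp
  rw [if_pos hi]
  dsimp only
  rw [sgn_as_prod i η, ← Finset.prod_mul_distrib]
  refine Finset.prod_congr rfl fun j _ => ?_
  by_cases h2 : (j:ℕ) % 2 = 1
  · have hji : j ≠ i := fun h => by rw [h] at h2; omega
    simp [hji, h2]
  · by_cases hji : j = i
    · subst hji
      have h2' : ¬ ((j:ℕ) % 2 = 1) := by omega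
      simp [h2']
    · simp [hji, h2]


set_option maxHeartbeats 1000000 in
lemma Ei_hh {X : Type*} [NormedAddCommGroup X] [NormedSpace ℝ X]
    (J : ((Fin n → Bool) → ℝ) →ₗ[ℝ] X) (i : Fin n) :
    Ei n ((i:ℕ)+1) (fun ε => J (hh n i ε)) = fun ε => J (gg n i ε) := by
  by_cases hi : (i:ℕ) % 2 = 0
  · unfold Ei
    rw [condExp_J]
    funext ε
    congr 1
    funext η
    rw [condExp_apply]
    have hrw : (fun ε' => hh n i ε' η) = fun ε' => ∏ j : Fin n,
        (fun (j : Fin n) (a : Bool) =>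
          if (j:ℕ) % 2 = 1 then q a (η j) else if j = i then sgn (η j) else 1) j (ε' j) :=
      funext fun ε' => hh_prod i hi η ε'
    rw [hrw, condExp_prod (firstIdx n ((i:ℕ)+1))
      (fun (j : Fin n) (a : Bool) =>
        if (j:ℕ) % 2 = 1 then q a (η j) else if j = i then sgn (η j) else 1)]
    have hcompl : (∏ j ∈ (firstIdx n ((i:ℕ)+1))ᶜ,
        (((if (j:ℕ) % 2 = 1 then q true (η j) else if j = i then sgn (η j) else 1) +
          (if (j:ℕ) % 2 = 1 then q false (η j) else if j = i then sgn (η j) else 1)) / 2))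
        = 1 := by
      refine Finset.prod_eq_one fun j hj => ?_
      rw [Finset.mem_compl] at hj
      have hj' : ¬ ((j:ℕ) < (i:ℕ)+1) := fun hlt => hj (by simp only [firstIdx, Finset.mem_filter, Finset.mem_univ, true_and]; exact hlt)
      have hjne : j ≠ i := fun h => hj' (by rw [h]; omega)
      by_cases h2 : (j:ℕ) % 2 = 1
      · rw [if_pos h2, if_pos h2, q_sum_fst]
        norm_num
      · rw [if_neg h2, if_neg h2, if_neg hjne]
        norm_num
    have hS : (∏ j ∈ firstIdx n ((i:ℕ)+1),
        (if (j:ℕ) % 2 = 1 then q (ε j) (η j) else if j = i then sgn (η j) else 1))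
        = sgn (η i) * Aa n (i:ℕ) ε η := by
      unfold firstIdx
      rw [Finset.prod_filter]
      unfold Aa
      rw [sgn_as_prod i η, ← Finset.prod_mul_distrib]
      refine Finset.prod_congr rfl fun j _ => ?_
      by_cases hlt : (j:ℕ) < (i:ℕ)+1
      · rw [if_pos hlt]
        by_cases h2 : (j:ℕ) % 2 = 1
        · have hji : j ≠ i := fun h => by rw [h] at h2; omega
          simp [hji, h2, hlt]
        · by_cases hji : j = i
          · subst hji
            have h2' : ¬ ((j:ℕ) % 2 = 1) := by omega
            simp [h2']
          · simp [hji, h2]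
      · rw [if_neg hlt]
        have hji : j ≠ i := fun h => hlt (by rw [h]; omega)
        have hna : ¬ ((j:ℕ) % 2 = 1 ∧ (j:ℕ) < (i:ℕ)+1) := fun hc => hlt hc.2
        simp [hji, hna]
        intro _ hle; exact absurd (Fin.le_iff_val_le_val.mp hle) (by omega)
    simp only [hcompl, hS, mul_one]
    unfold gg
    rw [if_pos hi]
  · have h1 : (fun ε => J (hh n i ε)) = fun _ => (0:X) := by
      funext ε
      have h2 : hh n i ε = (0 : (Fin n → Bool) → ℝ) := funext fun η => if_neg hi
      rw [h2, map_zero]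
    rw [h1]
    unfold Ei
    rw [condExp_zero]
    funext ε
    have h2 : gg n i ε = (0 : (Fin n → Bool) → ℝ) := funext fun η => if_neg hi
    rw [h2, map_zero]


lemma sumJ {X : Type*} [NormedAddCommGroup X] [NormedSpace ℝ X]
    (J : ((Fin n → Bool) → ℝ) →ₗ[ℝ] X) (δ : Fin n → Bool) (g : Fin n → (Fin n → Bool) → ℝ) :
    ∑ i : Fin n, sgn (δ i) • J (g i) = J (fun η => ∑ i : Fin n, sgn (δ i) * g i η) := by
  calc ∑ i : Fin n, sgn (δ i) • J (g i)
      = ∑ i : Fin n, J (sgn (δ i) • g i) :=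
        Finset.sum_congr rfl fun i _ => (map_smul J _ _).symm
  _ = J (∑ i : Fin n, sgn (δ i) • g i) := (map_sum J _ _).symm
  _ = J (fun η => ∑ i : Fin n, sgn (δ i) * g i η) := by
      congr 1
      funext η
      simp [Finset.sum_apply, Pi.smul_apply, smul_eq_mul]

lemma cubeLp_one_eq (g : (Fin n → Bool) → ℝ) :
    cubeLpNorm n 1 g = ((2:ℝ)^n)⁻¹ * ∑ η : Fin n → Bool, |g η| := by
  unfold cubeLpNorm
  have h1 : (1:ℝ)/1 = 1 := by norm_num
  rw [h1, Real.rpow_one]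
  congr 1
  refine Finset.sum_congr rfl fun η _ => ?_
  rw [Real.rpow_one, Real.norm_eq_abs]

lemma lp_le_of_forall {m : ℕ} {p b : ℝ} (hp : 1 ≤ p) (hb : 0 ≤ b)
    (g : (Fin m → Bool) → ℝ) (hg : ∀ x, 0 ≤ g x) (h : ∀ x, g x ≤ b) :
    (((2:ℝ)^m)⁻¹ * ∑ x : Fin m → Bool, g x ^ p) ^ (1/p) ≤ b := by
  have hp0 : (0:ℝ) < p := lt_of_lt_of_le one_pos hp
  have hcard : (Finset.univ : Finset (Fin m → Bool)).card = 2^m := by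
    rw [Finset.card_univ]
    simp [Fintype.card_fun]
  have hsum : ∑ x : Fin m → Bool, g x ^ p ≤ (2:ℝ)^m * b^p := by
    calc ∑ x : Fin m → Bool, g x ^ p ≤ ∑ _x : Fin m → Bool, b ^ p :=
          Finset.sum_le_sum fun x _ => Real.rpow_le_rpow (hg x) (h x) hp0.le
    _ = (2:ℝ)^m * b^p := by
        rw [Finset.sum_const, hcard, nsmul_eq_mul]
        push_cast
        ring
  have hnn : (0:ℝ) ≤ ∑ x : Fin m → Bool, g x ^ p :=
    Finset.sum_nonneg fun x _ => Real.rpow_nonneg (hg x) p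
  have h1 : ((2:ℝ)^m)⁻¹ * ∑ x : Fin m → Bool, g x ^ p ≤ b^p := by
    have h2 := mul_le_mul_of_nonneg_left hsum
      (inv_nonneg.mpr (le_of_lt (by positivity : (0:ℝ) < 2^m)))
    calc ((2:ℝ)^m)⁻¹ * ∑ x : Fin m → Bool, g x ^ p
        ≤ ((2:ℝ)^m)⁻¹ * ((2:ℝ)^m * b^p) := h2
    _ = b^p := by
        rw [← mul_assoc, inv_mul_cancel₀ (by positivity : ((2:ℝ)^m) ≠ 0), one_mul]
  calc (((2:ℝ)^m)⁻¹ * ∑ x : Fin m → Bool, g x ^ p) ^ (1/p)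
      ≤ (b^p) ^ (1/p) := by
        apply Real.rpow_le_rpow _ h1 (by positivity)
        positivity
  _ = b := by
      rw [← Real.rpow_mul hb, mul_one_div, div_self hp0.ne', Real.rpow_one]

lemma lp_ge_of_forall {m : ℕ} {p a : ℝ} (hp : 1 ≤ p) (ha : 0 ≤ a)
    (g : (Fin m → Bool) → ℝ) (h : ∀ x, a ≤ g x) :
    a ≤ (((2:ℝ)^m)⁻¹ * ∑ x : Fin m → Bool, g x ^ p) ^ (1/p) := by
  have hp0 : (0:ℝ) < p := lt_of_lt_of_le one_pos hp
  have hcard : (Finset.univ : Finset (Fin m → Bool)).card = 2^m := by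
    rw [Finset.card_univ]
    simp [Fintype.card_fun]
  have hsum : (2:ℝ)^m * a^p ≤ ∑ x : Fin m → Bool, g x ^ p := by
    calc (2:ℝ)^m * a^p = ∑ _x : Fin m → Bool, a ^ p := by
          rw [Finset.sum_const, hcard, nsmul_eq_mul]
          push_cast
          ring
    _ ≤ ∑ x : Fin m → Bool, g x ^ p :=
          Finset.sum_le_sum fun x _ => Real.rpow_le_rpow ha (h x) hp0.le
  have h1 : a^p ≤ ((2:ℝ)^m)⁻¹ * ∑ x : Fin m → Bool, g x ^ p := by
    have h2 := mul_le_mul_of_nonneg_left hsum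
      (inv_nonneg.mpr (le_of_lt (by positivity : (0:ℝ) < 2^m)))
    calc a^p = ((2:ℝ)^m)⁻¹ * ((2:ℝ)^m * a^p) := by
          rw [← mul_assoc, inv_mul_cancel₀ (by positivity : ((2:ℝ)^m) ≠ 0), one_mul]
    _ ≤ ((2:ℝ)^m)⁻¹ * ∑ x : Fin m → Bool, g x ^ p := h2
  calc a = (a^p) ^ (1/p) := by
        rw [← Real.rpow_mul ha, mul_one_div, div_self hp0.ne', Real.rpow_one]
  _ ≤ (((2:ℝ)^m)⁻¹ * ∑ x : Fin m → Bool, g x ^ p) ^ (1/p) := by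
      apply Real.rpow_le_rpow (by positivity) h1 (by positivity)

end SteinAux

namespace SteinAux

lemma cubeLp_nonneg {n : ℕ} {p : ℝ} {X : Type*} [NormedAddCommGroup X] [NormedSpace ℝ X]
    (f : (Fin n → Bool) → X) : 0 ≤ cubeLpNorm n p f := by
  unfold cubeLpNorm
  apply Real.rpow_nonneg
  have : (0:ℝ) ≤ ∑ ε : Fin n → Bool, ‖f ε‖ ^ p :=
    Finset.sum_nonneg fun ε _ => Real.rpow_nonneg (norm_nonneg _) p
  positivity

lemma main_construction {p : ℝ} (hp : 1 < p) {K : ℝ} (hK : 1 ≤ K) {n : ℕ} (hn : 0 < n)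
    {X : Type} [NormedAddCommGroup X] [NormedSpace ℝ X]
    (J : ((Fin n → Bool) → ℝ) →ₗ[ℝ] X)
    (hJ : ∀ h : (Fin n → Bool) → ℝ, cubeLpNorm n 1 h ≤ ‖J h‖ ∧ ‖J h‖ ≤ K * cubeLpNorm n 1 h) :
    ∃ f : Fin n → (Fin n → Bool) → X,
      (((2 : ℝ) ^ n)⁻¹ * ∑ δ : Fin n → Bool,
          (cubeLpNorm n p fun ε => ∑ i : Fin n, sgn (δ i) • Ei n ((i : ℕ) + 1) (f i) ε) ^ p) ^ (1 / p)
        ≥ (1/8) * K⁻¹ * Real.sqrt n * (((2 : ℝ) ^ n)⁻¹ * ∑ δ : Fin n → Bool,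
          (cubeLpNorm n p fun ε => ∑ i : Fin n, sgn (δ i) • f i ε) ^ p) ^ (1 / p) ∧
      0 < (((2 : ℝ) ^ n)⁻¹ * ∑ δ : Fin n → Bool,
          (cubeLpNorm n p fun ε => ∑ i : Fin n, sgn (δ i) • f i ε) ^ p) ^ (1 / p) := by
  have hKpos : (0:ℝ) < K := lt_of_lt_of_le one_pos hK
  have h2n : (0:ℝ) < (2:ℝ)^n := by positivity
  -- the construction
  refine ⟨fun i ε => J (hh n i ε), ?_⟩
  -- pointwise identities
  have hA : ∀ δ ε : Fin n → Bool,
      (∑ i : Fin n, sgn (δ i) • J (hh n i ε)) = J (RSfun n δ ε) := by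
    intro δ ε
    exact sumJ J δ (fun i => hh n i ε)
  have hB : ∀ δ ε : Fin n → Bool,
      (∑ i : Fin n, sgn (δ i) • Ei n ((i:ℕ)+1) (fun ε' => J (hh n i ε')) ε)
        = J (LSfun n δ ε) := by
    intro δ ε
    calc ∑ i : Fin n, sgn (δ i) • Ei n ((i:ℕ)+1) (fun ε' => J (hh n i ε')) ε
        = ∑ i : Fin n, sgn (δ i) • J (gg n i ε) :=
          Finset.sum_congr rfl fun i _ => by rw [Ei_hh J i]
    _ = J (LSfun n δ ε) := sumJ J δ (fun i => gg n i ε)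
  -- pointwise norm bounds
  have hRS_le : ∀ δ ε : Fin n → Bool, ‖J (RSfun n δ ε)‖ ≤ K * Real.sqrt n := by
    intro δ ε
    refine le_trans (hJ _).2 ?_
    refine mul_le_mul_of_nonneg_left ?_ hKpos.le
    rw [cubeLp_one_eq]
    calc ((2:ℝ)^n)⁻¹ * ∑ η : Fin n → Bool, |RSfun n δ ε η|
        ≤ ((2:ℝ)^n)⁻¹ * ((2:ℝ)^n * Real.sqrt n) :=
          mul_le_mul_of_nonneg_left (sum_abs_RS_le ε δ) (by positivity)
    _ = Real.sqrt n := by field_simp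
  have hRS_ge : ∀ δ ε : Fin n → Bool, (1:ℝ) ≤ ‖J (RSfun n δ ε)‖ := by
    intro δ ε
    refine le_trans ?_ (hJ _).1
    rw [cubeLp_one_eq]
    calc (1:ℝ) = ((2:ℝ)^n)⁻¹ * (2:ℝ)^n := by field_simp
    _ ≤ ((2:ℝ)^n)⁻¹ * ∑ η : Fin n → Bool, |RSfun n δ ε η| :=
        mul_le_mul_of_nonneg_left (sum_abs_RS_ge_one ε δ hn) (by positivity)
  have hLS_ge : ∀ δ ε : Fin n → Bool, (n:ℝ)/8 ≤ ‖J (LSfun n δ ε)‖ := by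
    intro δ ε
    refine le_trans ?_ (hJ _).1
    rw [cubeLp_one_eq]
    have hb1 : (1:ℝ) ≤ ((2:ℝ)^n)⁻¹ * ∑ η : Fin n → Bool, |LSfun n δ ε η| := by
      calc (1:ℝ) = ((2:ℝ)^n)⁻¹ * (2:ℝ)^n := by field_simp
      _ ≤ _ := mul_le_mul_of_nonneg_left (sum_abs_LS_ge_one ε δ hn) (by positivity)
    have hb2 : ((n/2 : ℕ):ℝ) / 2 ≤ ((2:ℝ)^n)⁻¹ * ∑ η : Fin n → Bool, |LSfun n δ ε η| := by
      calc ((n/2 : ℕ):ℝ) / 2 = ((2:ℝ)^n)⁻¹ * (((n/2 : ℕ):ℝ) * ((2:ℝ)^n / 2)) := by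
            field_simp
      _ ≤ _ := mul_le_mul_of_nonneg_left (sum_abs_LS_ge_G ε δ) (by positivity)
    have hhalf : ((n:ℝ) - 1) / 2 ≤ ((n/2 : ℕ):ℝ) := by
      have h := Nat.div_add_mod n 2
      have h2 : n % 2 < 2 := Nat.mod_lt _ (by norm_num)
      have : (n:ℝ) = 2 * ((n/2 : ℕ):ℝ) + ((n % 2 : ℕ):ℝ) := by
        exact_mod_cast (congrArg (Nat.cast : ℕ → ℝ) h).symm
      have h3 : ((n % 2 : ℕ):ℝ) ≤ 1 := by exact_mod_cast Nat.lt_succ_iff.mp h2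
      linarith
    by_cases hn8 : (n:ℝ) ≤ 8
    · linarith
    · have : (n:ℝ)/8 ≤ ((n:ℝ) - 1)/4 := by linarith
      linarith
  -- outer assembly
  have hnn8 : (0:ℝ) ≤ (n:ℝ)/8 := by positivity
  have hLHS : (n:ℝ)/8 ≤ (((2 : ℝ) ^ n)⁻¹ * ∑ δ : Fin n → Bool,
      (cubeLpNorm n p fun ε => ∑ i : Fin n,
        sgn (δ i) • Ei n ((i : ℕ) + 1) ((fun i ε => J (hh n i ε)) i) ε) ^ p) ^ (1 / p) := by
    refine lp_ge_of_forall hp.le hnn8 _ fun δ => ?_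
    refine lp_ge_of_forall hp.le hnn8 _ fun ε => ?_
    dsimp only
    rw [hB δ ε]
    exact hLS_ge δ ε
  have hRHS_le : (((2 : ℝ) ^ n)⁻¹ * ∑ δ : Fin n → Bool,
      (cubeLpNorm n p fun ε => ∑ i : Fin n,
        sgn (δ i) • (fun i ε => J (hh n i ε)) i ε) ^ p) ^ (1 / p) ≤ K * Real.sqrt n := by
    refine lp_le_of_forall hp.le (by positivity) _ (fun δ => cubeLp_nonneg _) fun δ => ?_
    refine lp_le_of_forall hp.le (by positivity) _ (fun ε => norm_nonneg _) fun ε => ?_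
    dsimp only
    rw [hA δ ε]
    exact hRS_le δ ε
  have hRHS_ge : (1:ℝ) ≤ (((2 : ℝ) ^ n)⁻¹ * ∑ δ : Fin n → Bool,
      (cubeLpNorm n p fun ε => ∑ i : Fin n,
        sgn (δ i) • (fun i ε => J (hh n i ε)) i ε) ^ p) ^ (1 / p) := by
    refine lp_ge_of_forall hp.le zero_le_one _ fun δ => ?_
    refine lp_ge_of_forall hp.le zero_le_one _ fun ε => ?_
    dsimp only
    rw [hA δ ε]
    exact hRS_ge δ ε
  constructor
  · -- main inequality
    have hfac : (0:ℝ) ≤ (1/8) * K⁻¹ * Real.sqrt n := by positivity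
    calc (1/8) * K⁻¹ * Real.sqrt n * (((2 : ℝ) ^ n)⁻¹ * ∑ δ : Fin n → Bool,
          (cubeLpNorm n p fun ε => ∑ i : Fin n,
            sgn (δ i) • (fun i ε => J (hh n i ε)) i ε) ^ p) ^ (1 / p)
        ≤ (1/8) * K⁻¹ * Real.sqrt n * (K * Real.sqrt n) :=
          mul_le_mul_of_nonneg_left hRHS_le hfac
    _ = (n:ℝ)/8 * (K⁻¹ * K) := by
        rw [show (1/8 : ℝ) * K⁻¹ * Real.sqrt n * (K * Real.sqrt n)
            = (Real.sqrt n * Real.sqrt n)/8 * (K⁻¹ * K) by ring,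
          Real.mul_self_sqrt (Nat.cast_nonneg n)]
    _ = (n:ℝ)/8 := by
        rw [inv_mul_cancel₀ hKpos.ne', mul_one]
    _ ≤ _ := hLHS
  · exact lt_of_lt_of_le one_pos hRHS_ge

end SteinAux

/-- If a Banach space `X` contains an isomorphic copy of `L₁(𝒞_n;ℝ)` with distortion `K`,
then the Stein inequality on `𝒞_n` fails for `X` by a factor `c K⁻¹ √n`; in particular a
space containing the `ℓ₁ᴺ`'s uniformly satisfies no hypercube Stein inequality. -/
theorem stein_fails_if_contains_L1 :
    ∃ c : ℝ, 0 < c ∧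
      ((∀ (p : ℝ), 1 < p → ∀ (K : ℝ), 1 ≤ K → ∀ (n : ℕ), 0 < n →
        ∀ (X : Type) (_ : NormedAddCommGroup X) (_ : NormedSpace ℝ X) (_ : CompleteSpace X),
        ∀ J : ((Fin n → Bool) → ℝ) →ₗ[ℝ] X,
          (∀ h : (Fin n → Bool) → ℝ, cubeLpNorm n 1 h ≤ ‖J h‖ ∧ ‖J h‖ ≤ K * cubeLpNorm n 1 h) →
          ∃ f : Fin n → (Fin n → Bool) → X,
            (((2 : ℝ) ^ n)⁻¹ * ∑ δ : Fin n → Bool,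
                (cubeLpNorm n p fun ε =>
                  ∑ i : Fin n, sgn (δ i) • Ei n ((i : ℕ) + 1) (f i) ε) ^ p) ^ (1 / p)
              ≥ c * K⁻¹ * Real.sqrt n * (((2 : ℝ) ^ n)⁻¹ * ∑ δ : Fin n → Bool,
                (cubeLpNorm n p fun ε => ∑ i : Fin n, sgn (δ i) • f i ε) ^ p) ^ (1 / p) ∧
            0 < (((2 : ℝ) ^ n)⁻¹ * ∑ δ : Fin n → Bool,
                (cubeLpNorm n p fun ε => ∑ i : Fin n, sgn (δ i) • f i ε) ^ p) ^ (1 / p)) ∧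
      (∀ (p : ℝ), 1 < p →
        ∀ (X : Type) (_ : NormedAddCommGroup X) (_ : NormedSpace ℝ X) (_ : CompleteSpace X),
          (∃ K : ℝ, 1 ≤ K ∧ ∀ n : ℕ, 0 < n →
            ∃ J : ((Fin n → Bool) → ℝ) →ₗ[ℝ] X,
              ∀ h : (Fin n → Bool) → ℝ,
                cubeLpNorm n 1 h ≤ ‖J h‖ ∧ ‖J h‖ ≤ K * cubeLpNorm n 1 h) →
          ∀ s : ℝ, 0 < s → ¬ SteinIneq X p s)) := by
  refine ⟨1/8, by norm_num, ?_, ?_⟩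
  · intro p hp K hK n hn X _instG _instS _instC J hJ
    exact SteinAux.main_construction hp hK hn J hJ
  · rintro p hp X _instG _instS _instC ⟨K, hK, hJall⟩ s hs hstein
    have hKpos : (0:ℝ) < K := lt_of_lt_of_le one_pos hK
    set n : ℕ := Nat.ceil ((8*s*K)^2) + 1 with hndef
    have hn : 0 < n := Nat.succ_pos _
    obtain ⟨J, hJ⟩ := hJall n hn
    obtain ⟨f, hge, hpos⟩ := SteinAux.main_construction hp hK hn J hJ
    have hEpi : ∀ (k : ℕ) (F : (Fin n → Bool) → X), Epi n 1 k F = Ei n k F := by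
      intro k F
      unfold Epi Ei
      rw [Equiv.Perm.coe_one, Finset.image_id]
    have hstein' := hstein n hn 1 f
    simp only [hEpi] at hstein'
    have hslt : s < 1/8 * K⁻¹ * Real.sqrt n := by
      have h1 : ((8*s*K)^2 : ℝ) < (n:ℝ) := by
        have h2 : ((8*s*K)^2 : ℝ) ≤ ((Nat.ceil ((8*s*K)^2) : ℕ) : ℝ) := Nat.le_ceil _
        have h3 : ((Nat.ceil ((8*s*K)^2) : ℕ) : ℝ) < (n:ℝ) := by
          rw [hndef]
          exact_mod_cast Nat.lt_succ_self _
        linarith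
      have h4 : 8*s*K < Real.sqrt n :=
        (Real.lt_sqrt (by positivity)).mpr h1
      rw [show (1/8 : ℝ) * K⁻¹ * Real.sqrt n = Real.sqrt n / (8*K) by
        field_simp]
      rw [lt_div_iff₀ (by positivity : (0:ℝ) < 8*K)]
      calc s * (8*K) = 8*s*K := by ring
      _ < Real.sqrt n := h4
    have hmul := mul_lt_mul_of_pos_right hslt hpos
    linarith [hge, hstein', hmul]
end
end

section
/- Let p ∈ (1,∞) and q = p/(p−1), and let X be a real Banach space with continuous dual X*. Suppose that X* satisfies the hypercube Stein inequality with constant 𝔰 for exponent q, and that X* satisfies the Rademacher projection bound with constant K for exponent q, i.e., for every positive integer n and every G : 𝒞_n → X*, ‖Rad G‖_{L_q(𝒞_n;X*)} ≤ K ‖G‖_{L_q(𝒞_n;X*)}, where Rad G = Σ_{i=1}^n Ĝ({i}) w_{{i}}. Then X satisfies the hypercube Stein inequality with constant K·𝔰 for exponent p; that is, for every positive integer n, every permutation π of {1,…,n} and all f_1,…,f_n : 𝒞_n → X, (2^{−n} Σ_{δ∈𝒞_n} ‖Σ_{i=1}^n δ_i 𝔈_i^π f_i‖_{L_p(𝒞_n;X)}^p)^{1/p}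 ≤ K𝔰 (2^{−n} Σ_{δ∈𝒞_n} ‖Σ_{i=1}^n δ_i f_i‖_{L_p(𝒞_n;X)}^p)^{1/p}. -/
noncomputable section

open Finset

variable {X : Type*} [NormedAddCommGroup X] [NormedSpace ℝ X]

-- ################ my helpers ################

lemma sgn_mul_self' (b : Bool) : sgn b * sgn b = 1 := by cases b <;> simp [sgn]
lemma sgn_not' (b : Bool) : sgn (!b) = - sgn b := by cases b <;> simp [sgn]

lemma sum_sgn_mul_sgn {m : ℕ} (i j : Fin m) :
    ∑ δ : Fin m → Bool, sgn (δ i) * sgn (δ j) = if i = j then (2:ℝ)^m else 0 := by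
  rcases eq_or_ne i j with rfl | hij
  · simp only [if_pos rfl, sgn_mul_self']
    simp [Finset.card_univ]
  · rw [if_neg hij]
    set u : (Fin m → Bool) → (Fin m → Bool) := fun δ => Function.update δ i (!(δ i)) with hu
    have hinv : Function.Involutive u := by
      intro δ
      simp only [hu, Function.update_self, Bool.not_not, Function.update_idem,
        Function.update_eq_self]
    have hbij : Function.Bijective u := hinv.bijective
    have key := Function.Bijective.sum_comp hbij (fun δ : Fin m → Bool => sgn (δ i) * sgn (δ j))
    have h2 : ∀ δ : Fin m → Bool,
        sgn (u δ i) * sgn (u δ j) = -(sgn (δ i) * sgn (δ j)) := by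
      intro δ
      simp only [hu]
      rw [Function.update_self, Function.update_of_ne (Ne.symm hij), sgn_not']
      ring
    have key2 : ∑ δ : Fin m → Bool, sgn (u δ i) * sgn (u δ j)
        = ∑ δ : Fin m → Bool, -(sgn (δ i) * sgn (δ j)) :=
      Finset.sum_congr rfl fun δ _ => h2 δ
    rw [key2, Finset.sum_neg_distrib] at key
    linarith

lemma cubeLpNorm_nonneg {n : ℕ} {p : ℝ} (f : (Fin n → Bool) → X) :
    0 ≤ cubeLpNorm n p f :=
  Real.rpow_nonneg (by positivity) _

lemma cubeLp_pow {n : ℕ} {p : ℝ} (hp : p ≠ 0) (f : (Fin n → Bool) → X) :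
    (cubeLpNorm n p f) ^ p = ((2:ℝ)^n)⁻¹ * ∑ ε : Fin n → Bool, ‖f ε‖ ^ p := by
  have h0 : (0:ℝ) ≤ ((2:ℝ)^n)⁻¹ * ∑ ε : Fin n → Bool, ‖f ε‖ ^ p := by positivity
  rw [cubeLpNorm, one_div, Real.rpow_inv_rpow h0 hp]

lemma condExp_adjoint {n : ℕ} (S : Finset (Fin n))
    (φ : (Fin n → Bool) → StrongDual ℝ X) (f : (Fin n → Bool) → X) :
    ∑ ε : Fin n → Bool, φ ε (cubeCondExp n S f ε)
      = ∑ ε : Fin n → Bool, (cubeCondExp n S φ ε) (f ε) := by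
  simp only [cubeCondExp, map_smul, map_sum, ContinuousLinearMap.coe_smul',
    Pi.smul_apply, ContinuousLinearMap.coe_sum', Finset.sum_apply, smul_eq_mul]
  rw [← Finset.mul_sum, ← Finset.mul_sum]
  congr 1
  simp only [Finset.sum_filter]
  rw [Finset.sum_comm]
  refine Finset.sum_congr rfl fun ε _ => Finset.sum_congr rfl fun η _ => ?_
  have : (∀ j ∈ S, ε j = η j) ↔ (∀ j ∈ S, η j = ε j) := by
    constructor <;> exact fun h j hj => (h j hj).symm
  by_cases hc : ∀ j ∈ S, η j = ε j
  · rw [if_pos (this.mpr hc), if_pos hc]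
  · rw [if_neg (fun h => hc (this.mp h)), if_neg hc]

lemma Epi_adjoint {n : ℕ} (π : Equiv.Perm (Fin n)) (k : ℕ)
    (φ : (Fin n → Bool) → StrongDual ℝ X) (f : (Fin n → Bool) → X) :
    ∑ ε : Fin n → Bool, φ ε (Epi n π k f ε)
      = ∑ ε : Fin n → Bool, (Epi n π k φ ε) (f ε) :=
  condExp_adjoint _ φ f

lemma nested_to_prod {ι κ : Type*} [Fintype ι] [Fintype κ] (c : ℝ) (x : ι → κ → ℝ) :
    c * ∑ i : ι, (c * ∑ j : κ, x i j) = (c * c) * ∑ z : ι × κ, x z.1 z.2 := by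
  rw [Fintype.sum_prod_type]
  simp only [Finset.mul_sum]
  exact Finset.sum_congr rfl fun _ _ => Finset.sum_congr rfl fun _ _ => by ring

lemma nested_comm {ι κ : Type*} [Fintype ι] [Fintype κ] (c : ℝ) (x : ι → κ → ℝ) :
    c * ∑ i : ι, (c * ∑ j : κ, x i j) = c * ∑ j : κ, (c * ∑ i : ι, x i j) := by
  simp only [← Finset.mul_sum]
  rw [Finset.sum_comm]

lemma weighted_holder {ι : Type*} [Fintype ι] {p q c : ℝ} (hpq : Real.HolderConjugate p q)
    (hc : 0 < c) (a b : ι → ℝ) (ha : ∀ i, 0 ≤ a i) (hb : ∀ i, 0 ≤ b i) :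
    c * ∑ i : ι, a i * b i
      ≤ (c * ∑ i : ι, a i ^ q) ^ (1/q) * (c * ∑ i : ι, b i ^ p) ^ (1/p) := by
  have hA : (0:ℝ) ≤ ∑ i : ι, a i ^ q := Finset.sum_nonneg fun i _ => Real.rpow_nonneg (ha i) _
  have hB : (0:ℝ) ≤ ∑ i : ι, b i ^ p := Finset.sum_nonneg fun i _ => Real.rpow_nonneg (hb i) _
  have h1 : ∑ i : ι, a i * b i
      ≤ (∑ i : ι, a i ^ q) ^ (1/q) * (∑ i : ι, b i ^ p) ^ (1/p) := by
    have := Real.inner_le_Lp_mul_Lq (univ : Finset ι) a b hpq.symm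
    simp only [fun i => abs_of_nonneg (ha i), fun i => abs_of_nonneg (hb i)] at this
    exact this
  have hcq : c ^ (1/q) * c ^ (1/p) = c := by
    rw [← Real.rpow_add hc, ← Real.rpow_one c]
    congr 1
    rw [Real.rpow_one]
    have := hpq.symm.inv_add_inv_eq_one
    rw [one_div, one_div]
    linarith
  have expand : (c * ∑ i : ι, a i ^ q) ^ (1/q) * (c * ∑ i : ι, b i ^ p) ^ (1/p)
      = c * ((∑ i : ι, a i ^ q) ^ (1/q) * (∑ i : ι, b i ^ p) ^ (1/p)) := by
    rw [Real.mul_rpow hc.le hA, Real.mul_rpow hc.le hB, mul_mul_mul_comm, hcq]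
  rw [expand]
  exact mul_le_mul_of_nonneg_left h1 hc.le

lemma pairing_reduce {m : ℕ} (G : (Fin m → Bool) → (Fin m → Bool) → StrongDual ℝ X)
    (B : Fin m → (Fin m → Bool) → X) :
    ∑ δ : Fin m → Bool, ∑ ε : Fin m → Bool, (G δ ε) (∑ i : Fin m, sgn (δ i) • B i ε)
      = ∑ i : Fin m, ∑ ε : Fin m → Bool,
          (∑ δ : Fin m → Bool, sgn (δ i) • G δ ε) (B i ε) := by
  simp only [map_sum, map_smul, smul_eq_mul, ContinuousLinearMap.coe_sum', Finset.sum_apply,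
    ContinuousLinearMap.coe_smul', Pi.smul_apply]
  calc ∑ δ : Fin m → Bool, ∑ ε : Fin m → Bool, ∑ i : Fin m, sgn (δ i) * (G δ ε) (B i ε)
      = ∑ δ : Fin m → Bool, ∑ i : Fin m, ∑ ε : Fin m → Bool, sgn (δ i) * (G δ ε) (B i ε) :=
        Finset.sum_congr rfl fun δ _ => Finset.sum_comm
    _ = ∑ i : Fin m, ∑ δ : Fin m → Bool, ∑ ε : Fin m → Bool, sgn (δ i) * (G δ ε) (B i ε) :=
        Finset.sum_comm
    _ = ∑ i : Fin m, ∑ ε : Fin m → Bool, ∑ δ : Fin m → Bool, sgn (δ i) * (G δ ε) (B i ε) :=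
        Finset.sum_congr rfl fun i _ => Finset.sum_comm

lemma sgn_coeff {m : ℕ} (A : Fin m → (Fin m → Bool) → StrongDual ℝ X) (i : Fin m)
    (ε : Fin m → Bool) :
    ∑ δ : Fin m → Bool, sgn (δ i) • (∑ j : Fin m, sgn (δ j) • A j ε)
      = ((2:ℝ)^m) • A i ε := by
  have h1 : ∀ δ : Fin m → Bool, sgn (δ i) • (∑ j : Fin m, sgn (δ j) • A j ε)
      = ∑ j : Fin m, (sgn (δ i) * sgn (δ j)) • A j ε := by
    intro δ
    rw [Finset.smul_sum]
    exact Finset.sum_congr rfl fun j _ => (smul_smul _ _ _)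
  rw [Finset.sum_congr rfl fun δ _ => h1 δ, Finset.sum_comm]
  have h2 : ∀ j : Fin m, ∑ δ : Fin m → Bool, (sgn (δ i) * sgn (δ j)) • A j ε
      = (if i = j then ((2:ℝ)^m) else 0) • A j ε := by
    intro j
    rw [← Finset.sum_smul, sum_sgn_mul_sgn]
  rw [Finset.sum_congr rfl fun j _ => h2 j]
  simp [ite_smul]


set_option maxHeartbeats 1000000 in
/-- Duality (Proposition `fact:hn1` of the paper): if the dual `X*` satisfies the hypercube
Stein inequality with constant `s` for the conjugate exponent `q = p/(p−1)` and the Rademacher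
projection bound with constant `K` for exponent `q`, then `X` satisfies the hypercube Stein
inequality with constant `K·s` for exponent `p`. -/
theorem stein_of_dual_stein (p : ℝ) (hp : 1 < p) (s K : ℝ) (hs : 0 < s) (hK : 0 < K)
    (X : Type*) [NormedAddCommGroup X] [NormedSpace ℝ X] [CompleteSpace X]
    (hStein : SteinIneq (StrongDual ℝ X) (p / (p - 1)) s)
    (hRad : ∀ n : ℕ, 0 < n → ∀ G : (Fin n → Bool) → StrongDual ℝ X,
      cubeLpNorm n (p / (p - 1))
          (fun ε => ∑ i : Fin n, walsh n {i} ε • walshCoeff n G {i})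
        ≤ K * cubeLpNorm n (p / (p - 1)) G) :
    SteinIneq X p (K * s) := by
  intro m hm π f
  have hpq : p.HolderConjugate (p / (p - 1)) := Real.HolderConjugate.conjExponent hp
  set q : ℝ := p / (p - 1) with hq
  have hp0 : p ≠ 0 := hpq.ne_zero
  have hq0 : q ≠ 0 := hpq.symm.ne_zero
  have hqpos : 0 < q := hpq.symm.pos
  have hc : (0:ℝ) < ((2:ℝ)^m)⁻¹ := by positivity
  -- rewrite goal into nested-sum form
  simp only [cubeLp_pow hp0]
  obtain ⟨F, hF⟩ : ∃ F : (Fin m → Bool) → (Fin m → Bool) → X,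
      F = fun δ ε => ∑ i : Fin m, sgn (δ i) • Epi m π ((i : ℕ) + 1) (f i) ε := ⟨_, rfl⟩
  obtain ⟨V, hV⟩ : ∃ V : (Fin m → Bool) → (Fin m → Bool) → X,
      V = fun δ ε => ∑ i : Fin m, sgn (δ i) • f i ε := ⟨_, rfl⟩
  suffices h : (((2:ℝ)^m)⁻¹ * ∑ δ : Fin m → Bool,
        (((2:ℝ)^m)⁻¹ * ∑ ε : Fin m → Bool, ‖F δ ε‖ ^ p)) ^ (1/p)
      ≤ K * s * ((((2:ℝ)^m)⁻¹ * ∑ δ : Fin m → Bool,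
        (((2:ℝ)^m)⁻¹ * ∑ ε : Fin m → Bool, ‖V δ ε‖ ^ p))) ^ (1/p) by
    simpa only [hF, hV] using h
  set T : ℝ := ((2:ℝ)^m)⁻¹ * ∑ δ : Fin m → Bool,
      (((2:ℝ)^m)⁻¹ * ∑ ε : Fin m → Bool, ‖F δ ε‖ ^ p) with hT
  set R : ℝ := ((((2:ℝ)^m)⁻¹ * ∑ δ : Fin m → Bool,
      (((2:ℝ)^m)⁻¹ * ∑ ε : Fin m → Bool, ‖V δ ε‖ ^ p))) ^ (1/p) with hR
  have hRnn : (0:ℝ) ≤ R := by rw [hR]; positivity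
  have hTnn : (0:ℝ) ≤ T := by rw [hT]; positivity
  rcases hTnn.eq_or_lt.imp Eq.symm id with hT0 | hT0
  · rw [hT0, Real.zero_rpow (one_div_ne_zero hp0)]
    positivity
  -- main case
  choose Φ hΦ1 hΦ2 using fun (δ ε : Fin m → Bool) => exists_dual_vector'' ℝ (F δ ε)
  obtain ⟨G, hG⟩ : ∃ G : (Fin m → Bool) → (Fin m → Bool) → StrongDual ℝ X,
      G = fun δ ε => (‖F δ ε‖ ^ (p-1)) • Φ δ ε := ⟨_, rfl⟩
  obtain ⟨GG, hGG⟩ : ∃ GG : Fin m → (Fin m → Bool) → StrongDual ℝ X,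
      GG = fun i ε => ((2:ℝ)^m)⁻¹ • ∑ δ : Fin m → Bool, sgn (δ i) • G δ ε := ⟨_, rfl⟩
  obtain ⟨U, hU⟩ : ∃ U : (Fin m → Bool) → (Fin m → Bool) → StrongDual ℝ X,
      U = fun δ ε => ∑ i : Fin m, sgn (δ i) • Epi m π ((i : ℕ) + 1) (GG i) ε := ⟨_, rfl⟩
  obtain ⟨W, hW⟩ : ∃ W : (Fin m → Bool) → (Fin m → Bool) → StrongDual ℝ X,
      W = fun δ ε => ∑ i : Fin m, sgn (δ i) • GG i ε := ⟨_, rfl⟩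
  -- (1) G pairing with F
  have hGF : ∀ δ ε : Fin m → Bool, (G δ ε) (F δ ε) = ‖F δ ε‖ ^ p := by
    intro δ ε
    rw [hG]
    simp only [ContinuousLinearMap.smul_apply, smul_eq_mul]
    rw [hΦ2 δ ε]
    calc ‖F δ ε‖ ^ (p-1) * ‖F δ ε‖ = ‖F δ ε‖ ^ (p-1) * ‖F δ ε‖ ^ (1:ℝ) := by
          rw [Real.rpow_one]
      _ = ‖F δ ε‖ ^ ((p-1)+1) :=
          (Real.rpow_add' (norm_nonneg _) (by rw [show p-1+1 = p by ring]; exact hp0)).symm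
      _ = ‖F δ ε‖ ^ p := by rw [show p-1+1 = p by ring]
  -- (2) G norm bound
  have hGq : ∀ δ ε : Fin m → Bool, ‖G δ ε‖ ^ q ≤ ‖F δ ε‖ ^ p := by
    intro δ ε
    have h1 : ‖G δ ε‖ ≤ ‖F δ ε‖ ^ (p-1) := by
      rw [hG]
      simp only [norm_smul, Real.norm_eq_abs,
        abs_of_nonneg (Real.rpow_nonneg (norm_nonneg (F δ ε)) (p-1))]
      calc ‖F δ ε‖ ^ (p-1) * ‖Φ δ ε‖ ≤ ‖F δ ε‖ ^ (p-1) * 1 :=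
            mul_le_mul_of_nonneg_left (hΦ1 δ ε) (Real.rpow_nonneg (norm_nonneg _) _)
        _ = ‖F δ ε‖ ^ (p-1) := mul_one _
    calc ‖G δ ε‖ ^ q ≤ (‖F δ ε‖ ^ (p-1)) ^ q :=
          Real.rpow_le_rpow (norm_nonneg _) h1 hqpos.le
      _ = ‖F δ ε‖ ^ ((p-1) * q) := (Real.rpow_mul (norm_nonneg _) _ _).symm
      _ = ‖F δ ε‖ ^ p := by rw [hpq.sub_one_mul_conj]
  -- middle quantity
  obtain ⟨M, hM⟩ : ∃ M : ℝ,
      M = ∑ i : Fin m, ∑ ε : Fin m → Bool, (Epi m π ((i : ℕ) + 1) (GG i) ε) (f i ε) := ⟨_, rfl⟩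
  -- step 1
  have hmid1 : ∑ δ : Fin m → Bool, ∑ ε : Fin m → Bool, (G δ ε) (F δ ε) = (2:ℝ)^m * M := by
    have e1 : ∑ δ : Fin m → Bool, ∑ ε : Fin m → Bool, (G δ ε) (F δ ε)
        = ∑ δ : Fin m → Bool, ∑ ε : Fin m → Bool,
            (G δ ε) (∑ i : Fin m, sgn (δ i) • Epi m π ((i : ℕ) + 1) (f i) ε) := by
      rw [hF]
    rw [e1, pairing_reduce]
    have e2 : ∀ (i : Fin m) (ε : Fin m → Bool),
        (∑ δ : Fin m → Bool, sgn (δ i) • G δ ε) = ((2:ℝ)^m) • GG i ε := by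
      intro i ε
      rw [hGG]
      simp only []
      rw [smul_smul, mul_inv_cancel₀ (by positivity : ((2:ℝ)^m) ≠ 0), one_smul]
    calc ∑ i : Fin m, ∑ ε : Fin m → Bool,
            (∑ δ : Fin m → Bool, sgn (δ i) • G δ ε) (Epi m π ((i : ℕ) + 1) (f i) ε)
        = ∑ i : Fin m, ∑ ε : Fin m → Bool,
            ((2:ℝ)^m) * ((GG i ε) (Epi m π ((i : ℕ) + 1) (f i) ε)) := by
          refine Finset.sum_congr rfl fun i _ => Finset.sum_congr rfl fun ε _ => ?_
          rw [e2 i ε]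
          simp [ContinuousLinearMap.smul_apply]
      _ = (2:ℝ)^m * ∑ i : Fin m, ∑ ε : Fin m → Bool,
            (GG i ε) (Epi m π ((i : ℕ) + 1) (f i) ε) := by
          rw [Finset.mul_sum]
          exact Finset.sum_congr rfl fun i _ => (Finset.mul_sum _ _ _).symm
      _ = (2:ℝ)^m * M := by
          rw [hM]
          congr 1
          exact Finset.sum_congr rfl fun i _ => Epi_adjoint π _ (GG i) (f i)
  -- step 2
  have hmid2 : ∑ δ : Fin m → Bool, ∑ ε : Fin m → Bool, (U δ ε) (V δ ε) = (2:ℝ)^m * M := by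
    have e1 : ∑ δ : Fin m → Bool, ∑ ε : Fin m → Bool, (U δ ε) (V δ ε)
        = ∑ δ : Fin m → Bool, ∑ ε : Fin m → Bool,
            (U δ ε) (∑ i : Fin m, sgn (δ i) • f i ε) := by rw [hV]
    rw [e1, pairing_reduce U f]
    have e2 : ∀ (i : Fin m) (ε : Fin m → Bool),
        (∑ δ : Fin m → Bool, sgn (δ i) • U δ ε)
          = ((2:ℝ)^m) • Epi m π ((i : ℕ) + 1) (GG i) ε := by
      intro i ε
      rw [hU]
      exact sgn_coeff (fun j ε => Epi m π ((j : ℕ) + 1) (GG j) ε) i ε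
    calc ∑ i : Fin m, ∑ ε : Fin m → Bool,
            (∑ δ : Fin m → Bool, sgn (δ i) • U δ ε) (f i ε)
        = ∑ i : Fin m, ∑ ε : Fin m → Bool,
            ((2:ℝ)^m) * ((Epi m π ((i : ℕ) + 1) (GG i) ε) (f i ε)) := by
          refine Finset.sum_congr rfl fun i _ => Finset.sum_congr rfl fun ε _ => ?_
          rw [e2 i ε]
          simp [ContinuousLinearMap.smul_apply]
      _ = (2:ℝ)^m * M := by
          rw [hM, Finset.mul_sum]
          exact Finset.sum_congr rfl fun i _ => (Finset.mul_sum _ _ _).symm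
  -- T in pairing form
  have hTpair : T = ((2:ℝ)^m)⁻¹ * ∑ δ : Fin m → Bool,
      (((2:ℝ)^m)⁻¹ * ∑ ε : Fin m → Bool, (U δ ε) (V δ ε)) := by
    rw [hT]
    simp only [← Finset.mul_sum]
    have key : ∑ δ : Fin m → Bool, ∑ ε : Fin m → Bool, ‖F δ ε‖ ^ p
        = ∑ δ : Fin m → Bool, ∑ ε : Fin m → Bool, (U δ ε) (V δ ε) :=
      calc ∑ δ : Fin m → Bool, ∑ ε : Fin m → Bool, ‖F δ ε‖ ^ p
          = ∑ δ : Fin m → Bool, ∑ ε : Fin m → Bool, (G δ ε) (F δ ε) :=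
            Finset.sum_congr rfl fun δ _ => Finset.sum_congr rfl fun ε _ => (hGF δ ε).symm
        _ = (2:ℝ)^m * M := hmid1
        _ = ∑ δ : Fin m → Bool, ∑ ε : Fin m → Bool, (U δ ε) (V δ ε) := hmid2.symm
    rw [key]
  -- Hölder step
  have hH : T ≤ (((2:ℝ)^m)⁻¹ * ∑ δ : Fin m → Bool,
        (((2:ℝ)^m)⁻¹ * ∑ ε : Fin m → Bool, ‖U δ ε‖ ^ q)) ^ (1/q) * R := by
    rw [hTpair, hR]
    have h1 : ((2:ℝ)^m)⁻¹ * ∑ δ : Fin m → Bool,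
          (((2:ℝ)^m)⁻¹ * ∑ ε : Fin m → Bool, (U δ ε) (V δ ε))
        ≤ ((2:ℝ)^m)⁻¹ * ∑ δ : Fin m → Bool,
          (((2:ℝ)^m)⁻¹ * ∑ ε : Fin m → Bool, ‖U δ ε‖ * ‖V δ ε‖) := by
      refine mul_le_mul_of_nonneg_left (Finset.sum_le_sum fun δ _ =>
        mul_le_mul_of_nonneg_left (Finset.sum_le_sum fun ε _ => ?_) hc.le) hc.le
      calc (U δ ε) (V δ ε) ≤ ‖(U δ ε) (V δ ε)‖ := Real.le_norm_self _
        _ ≤ ‖U δ ε‖ * ‖V δ ε‖ := (U δ ε).le_opNorm (V δ ε)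
    refine h1.trans ?_
    rw [nested_to_prod, nested_to_prod, nested_to_prod]
    exact weighted_holder (ι := (Fin m → Bool) × (Fin m → Bool)) hpq (by positivity)
      (fun z => ‖U z.1 z.2‖) (fun z => ‖V z.1 z.2‖)
      (fun z => norm_nonneg _) (fun z => norm_nonneg _)
  -- Stein step
  have hSt : (((2:ℝ)^m)⁻¹ * ∑ δ : Fin m → Bool,
        (((2:ℝ)^m)⁻¹ * ∑ ε : Fin m → Bool, ‖U δ ε‖ ^ q)) ^ (1/q)
      ≤ s * (((2:ℝ)^m)⁻¹ * ∑ δ : Fin m → Bool,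
        (((2:ℝ)^m)⁻¹ * ∑ ε : Fin m → Bool, ‖W δ ε‖ ^ q)) ^ (1/q) := by
    have h := hStein m hm π GG
    simp only [cubeLp_pow hq0] at h
    simpa only [hU, hW] using h
  -- Rademacher step
  have hper : ∀ ε : Fin m → Bool,
      ((2:ℝ)^m)⁻¹ * ∑ δ : Fin m → Bool, ‖W δ ε‖ ^ q
        ≤ K ^ q * (((2:ℝ)^m)⁻¹ * ∑ δ : Fin m → Bool, ‖G δ ε‖ ^ q) := by
    intro ε
    have h := hRad m hm (fun δ => G δ ε)
    have hfun : (fun δ' : Fin m → Bool => ∑ i : Fin m,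
        walsh m {i} δ' • walshCoeff m (fun δ => G δ ε) {i}) = fun δ' => W δ' ε := by
      funext δ'
      rw [hW]
      refine Finset.sum_congr rfl fun i _ => ?_
      rw [hGG]
      simp only [walsh, walshCoeff, Finset.prod_singleton]
    rw [hfun] at h
    have h2 := Real.rpow_le_rpow (cubeLpNorm_nonneg _) h hqpos.le
    rw [Real.mul_rpow hK.le (cubeLpNorm_nonneg _), cubeLp_pow hq0, cubeLp_pow hq0] at h2
    exact h2
  have hRadAgg : (((2:ℝ)^m)⁻¹ * ∑ δ : Fin m → Bool,
        (((2:ℝ)^m)⁻¹ * ∑ ε : Fin m → Bool, ‖W δ ε‖ ^ q)) ^ (1/q)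
      ≤ K * (((2:ℝ)^m)⁻¹ * ∑ δ : Fin m → Bool,
        (((2:ℝ)^m)⁻¹ * ∑ ε : Fin m → Bool, ‖G δ ε‖ ^ q)) ^ (1/q) := by
    have hagg : ((2:ℝ)^m)⁻¹ * ∑ δ : Fin m → Bool,
          (((2:ℝ)^m)⁻¹ * ∑ ε : Fin m → Bool, ‖W δ ε‖ ^ q)
        ≤ K ^ q * (((2:ℝ)^m)⁻¹ * ∑ δ : Fin m → Bool,
          (((2:ℝ)^m)⁻¹ * ∑ ε : Fin m → Bool, ‖G δ ε‖ ^ q)) := by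
      rw [nested_comm]
      calc ((2:ℝ)^m)⁻¹ * ∑ ε : Fin m → Bool,
            (((2:ℝ)^m)⁻¹ * ∑ δ : Fin m → Bool, ‖W δ ε‖ ^ q)
          ≤ ((2:ℝ)^m)⁻¹ * ∑ ε : Fin m → Bool,
            (K ^ q * (((2:ℝ)^m)⁻¹ * ∑ δ : Fin m → Bool, ‖G δ ε‖ ^ q)) :=
            mul_le_mul_of_nonneg_left (Finset.sum_le_sum fun ε _ => hper ε) hc.le
        _ = K ^ q * (((2:ℝ)^m)⁻¹ * ∑ ε : Fin m → Bool,
            (((2:ℝ)^m)⁻¹ * ∑ δ : Fin m → Bool, ‖G δ ε‖ ^ q)) := by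
            rw [← Finset.mul_sum]
            ring
        _ = K ^ q * (((2:ℝ)^m)⁻¹ * ∑ δ : Fin m → Bool,
            (((2:ℝ)^m)⁻¹ * ∑ ε : Fin m → Bool, ‖G δ ε‖ ^ q)) := by
            rw [nested_comm]
    have h2 := Real.rpow_le_rpow (by positivity) hagg (by positivity : (0:ℝ) ≤ 1/q)
    have h3 : (K ^ q * (((2:ℝ)^m)⁻¹ * ∑ δ : Fin m → Bool,
          (((2:ℝ)^m)⁻¹ * ∑ ε : Fin m → Bool, ‖G δ ε‖ ^ q))) ^ (1/q)
        = K * (((2:ℝ)^m)⁻¹ * ∑ δ : Fin m → Bool,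
          (((2:ℝ)^m)⁻¹ * ∑ ε : Fin m → Bool, ‖G δ ε‖ ^ q)) ^ (1/q) := by
      rw [Real.mul_rpow (by positivity) (by positivity), one_div,
        Real.rpow_rpow_inv hK.le hq0]
    rw [h3] at h2
    exact h2
  -- G bounded by T
  have hGT : (((2:ℝ)^m)⁻¹ * ∑ δ : Fin m → Bool,
        (((2:ℝ)^m)⁻¹ * ∑ ε : Fin m → Bool, ‖G δ ε‖ ^ q)) ^ (1/q) ≤ T ^ (1/q) := by
    refine Real.rpow_le_rpow (by positivity) ?_ (by positivity)
    rw [hT]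
    exact mul_le_mul_of_nonneg_left (Finset.sum_le_sum fun δ _ =>
      mul_le_mul_of_nonneg_left (Finset.sum_le_sum fun ε _ => hGq δ ε) hc.le) hc.le
  -- assemble
  have hchain : T ≤ T ^ (1/q) * (K * s * R) := by
    calc T ≤ (((2:ℝ)^m)⁻¹ * ∑ δ : Fin m → Bool,
          (((2:ℝ)^m)⁻¹ * ∑ ε : Fin m → Bool, ‖U δ ε‖ ^ q)) ^ (1/q) * R := hH
      _ ≤ (s * (((2:ℝ)^m)⁻¹ * ∑ δ : Fin m → Bool,
          (((2:ℝ)^m)⁻¹ * ∑ ε : Fin m → Bool, ‖W δ ε‖ ^ q)) ^ (1/q)) * R :=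
          mul_le_mul_of_nonneg_right hSt hRnn
      _ ≤ (s * (K * (((2:ℝ)^m)⁻¹ * ∑ δ : Fin m → Bool,
          (((2:ℝ)^m)⁻¹ * ∑ ε : Fin m → Bool, ‖G δ ε‖ ^ q)) ^ (1/q))) * R :=
          mul_le_mul_of_nonneg_right
            (mul_le_mul_of_nonneg_left hRadAgg hs.le) hRnn
      _ ≤ (s * (K * T ^ (1/q))) * R :=
          mul_le_mul_of_nonneg_right
            (mul_le_mul_of_nonneg_left
              (mul_le_mul_of_nonneg_left hGT hK.le) hs.le) hRnn
      _ = T ^ (1/q) * (K * s * R) := by ring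
  have hsplit : T = T ^ (1/q) * T ^ (1/p) := by
    rw [← Real.rpow_add hT0, one_div, one_div, add_comm, hpq.inv_add_inv_eq_one, Real.rpow_one]
  have final : T ^ (1/q) * T ^ (1/p) ≤ T ^ (1/q) * (K * s * R) :=
    le_trans (le_of_eq hsplit.symm) hchain
  exact le_of_mul_le_mul_left final (Real.rpow_pos_of_pos hT0 _)
end
end
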